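/- A timed language L is accepted by a one-clock integer-reset timed automaton (1-IRTA) if and only if there exists a constant K ∈ ℕ such that the equivalence ≈^{L,K} is K-monotonic and has finite index. -/

import Mathlib

open scoped NNReal Classical

namespace IRTA

/-- A timestamp is a finite sequence of non-negative reals. -/
abbrev Timestamp : Type := List ℝ≥0

/-- A timed word is a finite sequence of (delay, letter) pairs. -/
abbrev TimedWord (A : Type) : Type := List (ℝ≥0 × A)

/-- Fractional part of a non-negative real. -/
noncomputable def fracPart (x : ℝ≥0) : ℝ≥0 := x - (⌊x⌋₊ : ℝ≥0)

/-- `x` is a natural-number value. -/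
def IsNatVal (x : ℝ≥0) : Prop := ∃ m : ℕ, x = (m : ℝ≥0)

/-- Region equivalence `≡^K`. -/
def RegEq (K : ℕ) (x y : ℝ≥0) : Prop :=
  (⌊x⌋₊ = ⌊y⌋₊ ∧ (fracPart x = 0 ↔ fracPart y = 0)) ∨ ((K : ℝ≥0) < x ∧ (K : ℝ≥0) < y)

/-- One step of the (greedy) clock evolution: reset whenever the value is an
integer between `0` and `K`. -/
noncomputable def resetStep (K : ℕ) (v : ℝ≥0) : ℝ≥0 :=
  if ∃ m : ℕ, m ≤ K ∧ v = (m : ℝ≥0) then 0 else v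

/-- Auxiliary function computing `c^K` with accumulator `v`. -/
noncomputable def cKAux (K : ℕ) : ℝ≥0 → Timestamp → ℝ≥0
  | v, [] => v
  | v, t :: d => cKAux K (resetStep K (v + t)) d

/-- `c^K(d)`: the sum of the delays after the last integral position of `d`. -/
noncomputable def cK (K : ℕ) (d : Timestamp) : ℝ≥0 := cKAux K 0 d

/-- `c^K` of a timed word is `c^K` of its timestamp. -/
noncomputable def cKW {A : Type} (K : ℕ) (w : TimedWord A) : ℝ≥0 :=
  cK K (w.map Prod.fst)

/-- `c^K_⊤` : `c^K` truncated at `K`. -/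
noncomputable def cKTop {A : Type} (K : ℕ) (w : TimedWord A) : WithTop ℝ≥0 :=
  if cKW K w ≤ (K : ℝ≥0) then ((cKW K w : ℝ≥0) : WithTop ℝ≥0) else ⊤

/-! ### Clock constraints and one-clock timed automata -/

/-- Clock constraints `φ ::= x < m | m < x | x = m | φ ∧ φ`. -/
inductive CC : Type where
  | lt : ℕ → CC
  | gt : ℕ → CC
  | eq : ℕ → CC
  | and : CC → CC → CC

/-- Satisfaction of a clock constraint by a clock value. -/
def CC.sat : CC → ℝ≥0 → Prop
  | .lt m, x => x < (m : ℝ≥0)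
  | .gt m, x => (m : ℝ≥0) < x
  | .eq m, x => x = (m : ℝ≥0)
  | .and φ ψ, x => φ.sat x ∧ ψ.sat x

/-- The largest constant appearing in a clock constraint. -/
def CC.maxConst : CC → ℕ
  | .lt m => m
  | .gt m => m
  | .eq m => m
  | .and φ ψ => max φ.maxConst ψ.maxConst

/-- A transition of a one-clock timed automaton; `reset = true` means the
clock is reset (the `r = 0` case). -/
structure TTrans (Q A : Type) where
  src : Q
  dst : Q
  lab : A
  guard : CC
  reset : Bool

/-- A one-clock timed automaton. -/
structure TA (A : Type) where
  Q : Type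
  init : Q
  final : Set Q
  trans : Set (TTrans Q A)

/-- The automaton has finitely many states and transitions. -/
def TA.IsFinite {A : Type} (M : TA A) : Prop := Finite M.Q ∧ M.trans.Finite

/-- Runs of a one-clock timed automaton between configurations. -/
inductive Steps {A : Type} (M : TA A) : M.Q × ℝ≥0 → TimedWord A → M.Q × ℝ≥0 → Prop
  | nil (c : M.Q × ℝ≥0) : Steps M c [] c
  | cons {q : M.Q} {ν t : ℝ≥0} {a : A} {w : TimedWord A} {c : M.Q × ℝ≥0}
      (θ : TTrans M.Q A) (hθ : θ ∈ M.trans) (hsrc : θ.src = q) (hlab : θ.lab = a)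
      (hg : θ.guard.sat (ν + t))
      (hrest : Steps M (θ.dst, if θ.reset then 0 else ν + t) w c) :
      Steps M (q, ν) ((t, a) :: w) c

/-- The language of `M` from a given configuration. -/
def TA.LangFrom {A : Type} (M : TA A) (c : M.Q × ℝ≥0) : Set (TimedWord A) :=
  {w | ∃ q' : M.Q, ∃ ν' : ℝ≥0, Steps M c w (q', ν') ∧ q' ∈ M.final}

/-- The language of `M` (from the initial configuration). -/
def TA.Lang {A : Type} (M : TA A) : Set (TimedWord A) := M.LangFrom (M.init, 0)

/-- Determinism: distinct transitions with the same source and letter have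
disjoint guards. -/
def TA.Deterministic {A : Type} (M : TA A) : Prop :=
  ∀ θ₁ ∈ M.trans, ∀ θ₂ ∈ M.trans, θ₁ ≠ θ₂ → θ₁.src = θ₂.src → θ₁.lab = θ₂.lab →
    ∀ x : ℝ≥0, ¬ (θ₁.guard.sat x ∧ θ₂.guard.sat x)

/-- Completeness: every timed word admits a run from the initial configuration. -/
def TA.Complete {A : Type} (M : TA A) : Prop :=
  ∀ w : TimedWord A, ∃ c : M.Q × ℝ≥0, Steps M (M.init, 0) w c

/-- A 1-IRTA: every resetting transition has an equality guard. -/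
def TA.IsIRTA {A : Type} (M : TA A) : Prop :=
  ∀ θ ∈ M.trans, θ.reset = true → ∃ m : ℕ, θ.guard = CC.eq m

/-- Guards allowed in a strict 1-IRTA with constant `K`. -/
def StrictGuard (K : ℕ) (φ : CC) : Prop :=
  (∃ m : ℕ, φ = CC.eq m) ∨ (∃ m : ℕ, φ = CC.and (CC.gt m) (CC.lt (m + 1))) ∨ φ = CC.gt K

/-- Strictness with constant `K`: every guard is of one of the allowed forms
and a guard is an equality iff the transition resets. -/
def TA.IsStrict {A : Type} (M : TA A) (K : ℕ) : Prop :=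
  ∀ θ ∈ M.trans, StrictGuard K θ.guard ∧ ((∃ m : ℕ, θ.guard = CC.eq m) ↔ θ.reset = true)

/-- All constants appearing in guards are at most `K`. -/
def TA.MaxConstLE {A : Type} (M : TA A) (K : ℕ) : Prop :=
  ∀ θ ∈ M.trans, θ.guard.maxConst ≤ K

/-- `M` reaches the same control state on reading `u` and `v` from the initial
configuration. -/
def TA.SameState {A : Type} (M : TA A) (u v : TimedWord A) : Prop :=
  ∃ q : M.Q, ∃ ν ν' : ℝ≥0, Steps M (M.init, 0) u (q, ν) ∧ Steps M (M.init, 0) v (q, ν')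

/-- A `K`-acceptor. -/
def IsKAcceptor {A : Type} (M : TA A) (K : ℕ) : Prop :=
  M.IsFinite ∧ M.Complete ∧ M.Deterministic ∧ M.IsIRTA ∧ M.IsStrict K ∧ M.MaxConstLE K ∧
    ∀ u v : TimedWord A, M.SameState u v → RegEq K (cKW K u) (cKW K v)

/-! ### Equivalences on timed words -/

/-- `L`-preservation of a relation on timed words. -/
def LPreserving {A : Type} (L : Set (TimedWord A)) (r : TimedWord A → TimedWord A → Prop) :
    Prop :=
  ∀ u v : TimedWord A, r u v → (u ∈ L ↔ v ∈ L)

/-- `K`-monotonicity of a relation on timed words. -/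
def KMonotonic {A : Type} (K : ℕ) (r : TimedWord A → TimedWord A → Prop) : Prop :=
  ∀ u v : TimedWord A, r u v →
    RegEq K (cKW K u) (cKW K v) ∧
      ∀ (a : A) (t t' : ℝ≥0), RegEq K (cKW K u + t) (cKW K v + t') →
        r (u ++ [(t, a)]) (v ++ [(t', a)])

/-- Finite index: there are finitely many classes `{v | r u v}`. -/
def FiniteIndex {A : Type} (r : TimedWord A → TimedWord A → Prop) : Prop :=
  Set.Finite (Set.range fun u : TimedWord A => {v : TimedWord A | r u v})

/-! ### The rescaling maps -/

/-- The bijection `f_{λ→λ'}` of the open unit interval. -/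
noncomputable def fScale (lam lam' t : ℝ≥0) : ℝ≥0 :=
  if t ≤ lam then (lam' / lam) * t else lam' + ((1 - lam') / (1 - lam)) * (t - lam)

/-- The new delay `t'` computed from the current clock values `y, y'` and delay `t`. -/
noncomputable def tauStep (K : ℕ) (y y' t : ℝ≥0) : ℝ≥0 :=
  if (IsNatVal y ∧ IsNatVal y') ∨ ((K : ℝ≥0) < y ∧ (K : ℝ≥0) < y') then t
  else (⌊t⌋₊ : ℝ≥0) + fScale (1 - fracPart y) (1 - fracPart y') (fracPart t)

/-- Auxiliary rescaling map on timestamps, carrying the current clock values. -/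
noncomputable def tauAux (K : ℕ) : ℝ≥0 → ℝ≥0 → Timestamp → Timestamp
  | _, _, [] => []
  | y, y', t :: d =>
      tauStep K y y' t ::
        tauAux K (resetStep K (y + t)) (resetStep K (y' + tauStep K y y' t)) d

/-- The rescaling map `τ_{x→x'}` on timestamps. -/
noncomputable def tau (K : ℕ) (x x' : ℝ≥0) (d : Timestamp) : Timestamp :=
  tauAux K (resetStep K x) (resetStep K x') d

/-- Auxiliary rescaling map on timed words. -/
noncomputable def tauWAux {A : Type} (K : ℕ) : ℝ≥0 → ℝ≥0 → TimedWord A → TimedWord A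
  | _, _, [] => []
  | y, y', (t, a) :: w =>
      (tauStep K y y' t, a) ::
        tauWAux K (resetStep K (y + t)) (resetStep K (y' + tauStep K y y' t)) w

/-- The rescaling map `τ_{x→x'}` on timed words. -/
noncomputable def tauW {A : Type} (K : ℕ) (x x' : ℝ≥0) (w : TimedWord A) : TimedWord A :=
  tauWAux K (resetStep K x) (resetStep K x') w

/-! ### Residuals and the syntactic equivalence -/

/-- The residual language `u^{-1}L`. -/
def residual {A : Type} (L : Set (TimedWord A)) (u : TimedWord A) : Set (TimedWord A) :=
  {w : TimedWord A | u ++ w ∈ L}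

/-- The syntactic equivalence `≈^{L,K}`. -/
def ApproxLK {A : Type} (L : Set (TimedWord A)) (K : ℕ) (u v : TimedWord A) : Prop :=
  RegEq K (cKW K u) (cKW K v) ∧
    (tauW K (cKW K u) (cKW K v)) '' (residual L u) = residual L v

/-! ### The automaton built from a monotonic equivalence -/

/-- The region guard `φ([t])`. -/
noncomputable def phiOf (K : ℕ) (t : ℝ≥0) : CC :=
  if t ≤ (K : ℝ≥0) then
    (if IsNatVal t then CC.eq ⌊t⌋₊ else CC.and (CC.gt ⌊t⌋₊) (CC.lt (⌊t⌋₊ + 1)))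
  else CC.gt K

/-- The automaton `A_≈` built from an equivalence `s` on timed words. -/
noncomputable def Aapprox {A : Type} (L : Set (TimedWord A)) (K : ℕ)
    (s : Setoid (TimedWord A)) : TA A where
  Q := Quotient s
  init := Quotient.mk s ([] : TimedWord A)
  final := {q : Quotient s | ∃ u : TimedWord A, q = Quotient.mk s u ∧ u ∈ L}
  trans := {θ : TTrans (Quotient s) A |
    ∃ (u : TimedWord A) (a : A) (t : ℝ≥0),
      θ.src = Quotient.mk s u ∧ θ.dst = Quotient.mk s (u ++ [(t, a)]) ∧ θ.lab = a ∧
      θ.guard = phiOf K (cKW K u + t) ∧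
      (θ.reset = true ↔ ∃ m : ℕ, m ≤ K ∧ cKW K u + t = (m : ℝ≥0))}

/-! ### Half-integral and small words -/

/-- Every delay has fractional part `0` or `1/2`. -/
def HalfIntegral {A : Type} (w : TimedWord A) : Prop :=
  ∀ p ∈ w, fracPart p.1 = 0 ∨ fracPart p.1 = 1 / 2

/-- Every delay is `< K + 1`. -/
def SmallWord {A : Type} (K : ℕ) (w : TimedWord A) : Prop :=
  ∀ p ∈ w, p.1 < (K : ℝ≥0) + 1

/-- The delays of `Σ_K`: half-integral values `≤ K + 1/2`. -/
def IsSigmaK (K : ℕ) (t : ℝ≥0) : Prop :=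
  (fracPart t = 0 ∨ fracPart t = 1 / 2) ∧ t ≤ (K : ℝ≥0) + 1 / 2

/-- Words over `Σ_K` (small half-integral words). -/
def SigmaWord {A : Type} (K : ℕ) (w : TimedWord A) : Prop :=
  ∀ p ∈ w, IsSigmaK K p.1



/-! ### `K`-acceptors with their region representatives -/

/-- A `K`-acceptor bundled with the half-integral representative of the
unique region of each state. -/
structure KAcc (A : Type) (K : ℕ) where
  M : TA A
  acc : IsKAcceptor M K
  reg : M.Q → ℝ≥0
  regHalf : ∀ q : M.Q, fracPart (reg q) = 0 ∨ fracPart (reg q) = 1 / 2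
  regLe : ∀ q : M.Q, reg q ≤ (K : ℝ≥0) + 1 / 2
  regSpec : ∀ (w : TimedWord A) (q : M.Q) (x : ℝ≥0),
    Steps M (M.init, 0) w (q, x) → RegEq K x (reg q)

/-- The minimization equivalences `∼^i` on the states of a `K`-acceptor. -/
def simEq {A : Type} {K : ℕ} (B : KAcc A K) : ℕ → B.M.Q → B.M.Q → Prop
  | 0, p, q => B.reg p = B.reg q ∧ (p ∈ B.M.final ↔ q ∈ B.M.final)
  | i + 1, p, q => simEq B i p q ∧
      ∀ (t : ℝ≥0) (a : A), IsSigmaK K t →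
        ∀ θ₁ θ₂ : TTrans B.M.Q A, θ₁ ∈ B.M.trans → θ₂ ∈ B.M.trans →
          θ₁.src = p → θ₂.src = q → θ₁.lab = a → θ₂.lab = a →
          θ₁.guard = phiOf K t → θ₂.guard = phiOf K t →
          simEq B i θ₁.dst θ₂.dst

/-- The quotient automaton `B/∼^m`. -/
noncomputable def quotTA {A : Type} {K : ℕ} (B : KAcc A K) (m : ℕ) : TA A where
  Q := Quot (simEq B m)
  init := Quot.mk (simEq B m) B.M.init
  final := {c : Quot (simEq B m) | ∃ q ∈ B.M.final, c = Quot.mk (simEq B m) q}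
  trans := {θ : TTrans (Quot (simEq B m)) A |
    ∃ θ₀ ∈ B.M.trans,
      θ.src = Quot.mk (simEq B m) θ₀.src ∧ θ.dst = Quot.mk (simEq B m) θ₀.dst ∧
      θ.lab = θ₀.lab ∧ θ.guard = θ₀.guard ∧ θ.reset = θ₀.reset}

/-! ### Observation tables -/

/-- An observation table over `Σ_K`. -/
structure ObsTable (A : Type) (K : ℕ) where
  U1 : Set (TimedWord A)
  E : Set (TimedWord A)
  val : TimedWord A → TimedWord A → Bool
  U1fin : U1.Finite
  Efin : E.Finite
  U1sigma : ∀ u ∈ U1, SigmaWord K u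
  Esigma : ∀ e ∈ E, SigmaWord K e
  epsU1 : ([] : TimedWord A) ∈ U1
  prefixClosed : ∀ (u : TimedWord A) (x : ℝ≥0 × A), u ++ [x] ∈ U1 → u ∈ U1
  epsE : ([] : TimedWord A) ∈ E
  suffixClosed : ∀ (x : ℝ≥0 × A) (e : TimedWord A), x :: e ∈ E → e ∈ E

/-- The set `U2` of one-letter `Σ_K`-extensions of `U1`. -/
def obsU2 {A : Type} {K : ℕ} (T : ObsTable A K) : Set (TimedWord A) :=
  {w : TimedWord A | ∃ u ∈ T.U1, ∃ (t : ℝ≥0) (a : A), IsSigmaK K t ∧ w = u ++ [(t, a)]}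

/-- `R(u)`: the row of `u` (restricted to `E`) together with `c^K_⊤(u)`. -/
noncomputable def Rof {A : Type} {K : ℕ} (T : ObsTable A K) (u : TimedWord A) :
    ({e : TimedWord A // e ∈ T.E} → Bool) × WithTop ℝ≥0 :=
  (fun e => T.val u e.1, cKTop K u)

/-- The table is closed. -/
def ObsTable.Closed {A : Type} {K : ℕ} (T : ObsTable A K) : Prop :=
  ∀ w ∈ obsU2 T, ∃ u ∈ T.U1, Rof T w = Rof T u

/-- The table is consistent. -/
def ObsTable.Consistent {A : Type} {K : ℕ} (T : ObsTable A K) : Prop :=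
  ∀ u ∈ T.U1, ∀ w ∈ T.U1, Rof T u = Rof T w →
    ∀ (t : ℝ≥0) (a : A), IsSigmaK K t → Rof T (u ++ [(t, a)]) = Rof T (w ++ [(t, a)])

/-- The automaton `A_𝒯` induced by a (closed and consistent) observation table. -/
noncomputable def ATable {A : Type} {K : ℕ} (T : ObsTable A K) : TA A where
  Q := {f : ({e : TimedWord A // e ∈ T.E} → Bool) × WithTop ℝ≥0 // ∃ u ∈ T.U1, f = Rof T u}
  init := ⟨Rof T [], ⟨[], T.epsU1, rfl⟩⟩
  final := {q | ∃ u ∈ T.U1, q.1 = Rof T u ∧ T.val u [] = true}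
  trans := {θ | ∃ u ∈ T.U1, ∃ (t : ℝ≥0) (a : A), IsSigmaK K t ∧
      θ.src.1 = Rof T u ∧ θ.dst.1 = Rof T (u ++ [(t, a)]) ∧ θ.lab = a ∧
      θ.guard = phiOf K (cKW K u + t) ∧
      (θ.reset = true ↔ ∃ m : ℕ, m ≤ K ∧ cKW K u + t = (m : ℝ≥0))}

/-- A `K`-acceptor is consistent with the observation table `𝒯`. -/
def ConsistentWith {A : Type} {K : ℕ} (M : TA A) (T : ObsTable A K) : Prop :=
  ∀ w : TimedWord A, (w ∈ T.U1 ∨ w ∈ obsU2 T) → ∀ e ∈ T.E,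
    ∀ (q : M.Q) (ν : ℝ≥0), Steps M (M.init, 0) (w ++ e) (q, ν) →
      (q ∈ M.final ↔ T.val w e = true)

/-- Isomorphism of one-clock timed automata. -/
structure TAIso {A : Type} (M N : TA A) where
  toEquiv : M.Q ≃ N.Q
  init_eq : toEquiv M.init = N.init
  final_iff : ∀ q : M.Q, q ∈ M.final ↔ toEquiv q ∈ N.final
  trans_iff : ∀ θ : TTrans M.Q A,
    θ ∈ M.trans ↔
      (⟨toEquiv θ.src, toEquiv θ.dst, θ.lab, θ.guard, θ.reset⟩ : TTrans N.Q A) ∈ N.trans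


/-! ### Auxiliary lemmas -/

lemma fracPart_lt_one (x : ℝ≥0) : fracPart x < 1 := by
  rw [fracPart, tsub_lt_iff_left (Nat.floor_le (zero_le : 0 ≤ x))]
  exact Nat.lt_floor_add_one x

lemma floor_add_fracPart (x : ℝ≥0) : (⌊x⌋₊ : ℝ≥0) + fracPart x = x :=
  add_tsub_cancel_of_le (Nat.floor_le (zero_le : 0 ≤ x))

lemma fracPart_eq_zero_iff {x : ℝ≥0} : fracPart x = 0 ↔ IsNatVal x := by
  constructor
  · intro h
    refine ⟨⌊x⌋₊, ?_⟩
    conv_lhs => rw [← floor_add_fracPart x, h, add_zero]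
  · rintro ⟨m, rfl⟩
    simp [fracPart, Nat.floor_natCast]

lemma floor_frac_decomp {n : ℕ} {f : ℝ≥0} (hf : f < 1) :
    ⌊(n : ℝ≥0) + f⌋₊ = n ∧ fracPart ((n : ℝ≥0) + f) = f := by
  have hfl : ⌊(n : ℝ≥0) + f⌋₊ = n := by
    rw [add_comm, Nat.floor_add_natCast (zero_le : 0 ≤ f), Nat.floor_eq_zero.2 hf, zero_add]
  exact ⟨hfl, by rw [fracPart, hfl, add_tsub_cancel_left]⟩

lemma lt_natCast_iff {m : ℕ} {x : ℝ≥0} : x < (m : ℝ≥0) ↔ ⌊x⌋₊ < m :=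
  (Nat.floor_lt (zero_le : 0 ≤ x)).symm

lemma eq_natCast_iff {m : ℕ} {x : ℝ≥0} : x = (m : ℝ≥0) ↔ (⌊x⌋₊ = m ∧ fracPart x = 0) := by
  constructor
  · rintro rfl; simp [fracPart, Nat.floor_natCast]
  · rintro ⟨h1, h2⟩
    rw [← floor_add_fracPart x, h1, h2, add_zero]

lemma natCast_lt_iff {m : ℕ} {x : ℝ≥0} :
    (m : ℝ≥0) < x ↔ (m < ⌊x⌋₊ ∨ (⌊x⌋₊ = m ∧ fracPart x ≠ 0)) := by
  rcases lt_trichotomy (⌊x⌋₊) m with h | h | h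
  · simp only [h.ne, false_and, or_false]
    constructor
    · intro h2
      have : x < m := lt_natCast_iff.2 h
      exact absurd (h2.trans this) (lt_irrefl _)
    · intro h2; omega
  · simp only [h, true_and, lt_irrefl, false_or]
    constructor
    · intro h2 hf
      have : x = (m : ℝ≥0) := eq_natCast_iff.2 ⟨h, hf⟩
      rw [this] at h2; exact lt_irrefl _ h2
    · intro hf
      have hx := (floor_add_fracPart x).symm
      rw [h] at hx
      rw [hx]
      exact lt_add_of_pos_right _ (pos_iff_ne_zero.2 hf)
  · constructor
    · intro _; omega
    · intro _
      calc (m : ℝ≥0) < ⌊x⌋₊ := by exact_mod_cast h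
        _ ≤ x := Nat.floor_le (zero_le : 0 ≤ x)


lemma RegEq.refl (K : ℕ) (x : ℝ≥0) : RegEq K x x := Or.inl ⟨rfl, Iff.rfl⟩

lemma RegEq.symm {K : ℕ} {x y : ℝ≥0} (h : RegEq K x y) : RegEq K y x := by
  rcases h with ⟨h1, h2⟩ | ⟨h1, h2⟩
  · exact Or.inl ⟨h1.symm, h2.symm⟩
  · exact Or.inr ⟨h2, h1⟩

lemma regEq_natCast {K m : ℕ} {x y : ℝ≥0} (h : RegEq K x y) (hx : x = (m : ℝ≥0))
    (hm : m ≤ K) : y = (m : ℝ≥0) := by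
  rcases h with ⟨h1, h2⟩ | ⟨h1, h2⟩
  · obtain ⟨hf, hz⟩ := eq_natCast_iff.1 hx
    exact eq_natCast_iff.2 ⟨h1 ▸ hf, h2.1 hz⟩
  · exfalso
    rw [hx] at h1
    exact absurd (Nat.cast_le.2 hm) (not_le.2 h1)

lemma regEq_gtK {K : ℕ} {x y : ℝ≥0} (h : RegEq K x y) (hx : (K : ℝ≥0) < x) :
    (K : ℝ≥0) < y := by
  rcases h with ⟨h1, h2⟩ | ⟨h1, h2⟩
  · rcases natCast_lt_iff.1 hx with h3 | ⟨h3, h4⟩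
    · exact natCast_lt_iff.2 (Or.inl (h1 ▸ h3))
    · refine natCast_lt_iff.2 (Or.inr ⟨h1 ▸ h3, fun hz => ?_⟩)
      exact h4 (h2.2 hz)
  · exact h2

lemma RegEq.trans {K : ℕ} {x y z : ℝ≥0} (h1 : RegEq K x y) (h2 : RegEq K y z) :
    RegEq K x z := by
  rcases h1 with ⟨a1, a2⟩ | ⟨a1, a2⟩
  · rcases h2 with ⟨b1, b2⟩ | ⟨b1, b2⟩
    · exact Or.inl ⟨a1.trans b1, a2.trans b2⟩
    · exact Or.inr ⟨regEq_gtK (RegEq.symm (Or.inl ⟨a1, a2⟩)) b1, b2⟩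
  · exact Or.inr ⟨a1, regEq_gtK h2 a2⟩

lemma regEq_add_natCast {K : ℕ} {x y : ℝ≥0} (h : RegEq K x y) (c : ℕ) :
    RegEq K (x + (c : ℝ≥0)) (y + (c : ℝ≥0)) := by
  rcases h with ⟨h1, h2⟩ | ⟨h1, h2⟩
  · left
    have dx := floor_frac_decomp (n := ⌊x⌋₊ + c) (f := fracPart x) (fracPart_lt_one x)
    have dy := floor_frac_decomp (n := ⌊y⌋₊ + c) (f := fracPart y) (fracPart_lt_one y)
    have ex : x + (c : ℝ≥0) = ((⌊x⌋₊ + c : ℕ) : ℝ≥0) + fracPart x := by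
      conv_lhs => rw [← floor_add_fracPart x]
      push_cast; ring
    have ey : y + (c : ℝ≥0) = ((⌊y⌋₊ + c : ℕ) : ℝ≥0) + fracPart y := by
      conv_lhs => rw [← floor_add_fracPart y]
      push_cast; ring
    rw [ex, ey, dx.1, dy.1, dx.2, dy.2]
    exact ⟨by rw [h1], h2⟩
  · exact Or.inr ⟨lt_of_lt_of_le h1 (le_add_right le_rfl), lt_of_lt_of_le h2 (le_add_right le_rfl)⟩

lemma resetStep_regEq {K : ℕ} {x y : ℝ≥0} (h : RegEq K x y) :
    RegEq K (resetStep K x) (resetStep K y) := by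
  unfold resetStep
  by_cases hx : ∃ m : ℕ, m ≤ K ∧ x = (m : ℝ≥0)
  · obtain ⟨m, hm, hxm⟩ := hx
    have hy : y = (m : ℝ≥0) := regEq_natCast h hxm hm
    rw [if_pos ⟨m, hm, hxm⟩, if_pos ⟨m, hm, hy⟩]
    exact RegEq.refl K 0
  · have hy : ¬ ∃ m : ℕ, m ≤ K ∧ y = (m : ℝ≥0) := by
      rintro ⟨m, hm, hym⟩
      exact hx ⟨m, hm, regEq_natCast (RegEq.symm h) hym hm⟩
    rw [if_neg hx, if_neg hy]
    exact h

lemma resetStep_natCast_iff {K : ℕ} {x y : ℝ≥0} (h : RegEq K x y)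
    (hx : ¬ ∃ m : ℕ, m ≤ K ∧ x = (m : ℝ≥0)) : ¬ ∃ m : ℕ, m ≤ K ∧ y = (m : ℝ≥0) := by
  rintro ⟨m, hm, hym⟩
  exact hx ⟨m, hm, regEq_natCast (RegEq.symm h) hym hm⟩


section fScale
variable {lam lam' lam'' s : ℝ≥0}

lemma fScale_zero (h : 0 ≤ lam) : fScale lam lam' 0 = 0 := by
  simp [fScale]

lemma fScale_lt_of_lt (hl : 0 < lam) (hs : s < lam) : fScale lam lam' s < lam' ∨ lam' = 0 := by
  rcases eq_or_ne lam' 0 with h | h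
  · exact Or.inr h
  · left
    rw [fScale, if_pos hs.le]
    calc (lam' / lam) * s < (lam' / lam) * lam :=
          mul_lt_mul_of_pos_left hs (div_pos (pos_iff_ne_zero.2 h) hl)
      _ = lam' := div_mul_cancel₀ lam' hl.ne'

lemma fScale_eq_of_eq (hl : 0 < lam) : fScale lam lam' lam = lam' := by
  rw [fScale, if_pos le_rfl, div_mul_cancel₀ lam' hl.ne']

lemma fScale_gt_of_gt (hl1 : lam < 1) (hl' : 0 < lam') (hl1' : lam' < 1) (hs : lam < s) :
    lam' < fScale lam lam' s := by
  rw [fScale, if_neg (not_le.2 hs)]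
  refine lt_add_of_pos_right _ (mul_pos (div_pos ?_ ?_) ?_)
  · exact tsub_pos_of_lt hl1'
  · exact tsub_pos_of_lt hl1
  · exact tsub_pos_of_lt hs

lemma fScale_le_of_le (hl : 0 < lam) (hs : s ≤ lam) : fScale lam lam' s ≤ lam' := by
  rw [fScale, if_pos hs]
  calc (lam' / lam) * s ≤ (lam' / lam) * lam := mul_le_mul_of_nonneg_left hs zero_le
    _ = lam' := div_mul_cancel₀ lam' hl.ne'

lemma fScale_lt_one (hl : 0 < lam) (hl1 : lam < 1) (hl1' : lam' < 1) (hs : s < 1) :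
    fScale lam lam' s < 1 := by
  rcases le_or_gt s lam with h | h
  · exact lt_of_le_of_lt (fScale_le_of_le hl h) hl1'
  · rw [fScale, if_neg (not_le.2 h)]
    calc lam' + ((1 - lam') / (1 - lam)) * (s - lam)
        < lam' + ((1 - lam') / (1 - lam)) * (1 - lam) := by
          refine add_lt_add_right (mul_lt_mul_of_pos_left ?_ (div_pos (tsub_pos_of_lt hl1') (tsub_pos_of_lt hl1))) _
          exact tsub_lt_tsub_right_of_le h.le hs
      _ = lam' + (1 - lam') := by rw [div_mul_cancel₀ _ (tsub_pos_of_lt hl1).ne']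
      _ = 1 := add_tsub_cancel_of_le hl1'.le

lemma fScale_eq_zero_iff (hl : 0 < lam) (hl1 : lam < 1) (hl' : 0 < lam') (hl1' : lam' < 1) :
    fScale lam lam' s = 0 ↔ s = 0 := by
  constructor
  · intro h
    rcases le_or_gt s lam with hs | hs
    · rw [fScale, if_pos hs] at h
      rcases mul_eq_zero.1 h with h1 | h1
      · exact absurd h1 (div_pos hl' hl).ne'
      · exact h1
    · exact absurd h (lt_of_le_of_lt zero_le (fScale_gt_of_gt hl1 hl' hl1' hs)).ne'
  · rintro rfl; exact fScale_zero zero_le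

lemma fScale_self (hl : 0 < lam) (hl1 : lam < 1) : fScale lam lam s = s := by
  rcases le_or_gt s lam with h | h
  · rw [fScale, if_pos h, div_self hl.ne', one_mul]
  · rw [fScale, if_neg (not_le.2 h), div_self (tsub_pos_of_lt hl1).ne', one_mul,
      add_tsub_cancel_of_le h.le]

lemma fScale_comp (hl : 0 < lam) (hl1 : lam < 1) (hl' : 0 < lam') (hl1' : lam' < 1) :
    fScale lam' lam'' (fScale lam lam' s) = fScale lam lam'' s := by
  rcases le_or_gt s lam with h | h
  · have h2 : fScale lam lam' s ≤ lam' := fScale_le_of_le hl h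
    rw [fScale, if_pos h2, fScale, if_pos h, fScale, if_pos h]
    rw [← mul_assoc, div_mul_div_comm, mul_comm lam'' lam', mul_div_mul_left _ _ hl'.ne']
  · have h2 : lam' < fScale lam lam' s := fScale_gt_of_gt hl1 hl' hl1' h
    rw [fScale, if_neg (not_le.2 h2), fScale, if_neg (not_le.2 h), fScale, if_neg (not_le.2 h)]
    rw [add_tsub_cancel_left, ← mul_assoc, div_mul_div_comm, mul_comm (1-lam'') (1-lam'),
      mul_div_mul_left _ _ (tsub_pos_of_lt hl1').ne']

end fScale

section tauStep
variable {K : ℕ} {y y' y'' t : ℝ≥0}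

lemma else_info (h : RegEq K y y')
    (hP : ¬ ((IsNatVal y ∧ IsNatVal y') ∨ ((K : ℝ≥0) < y ∧ (K : ℝ≥0) < y'))) :
    fracPart y ≠ 0 ∧ fracPart y' ≠ 0 ∧ ⌊y⌋₊ = ⌊y'⌋₊ := by
  rcases h with ⟨h1, h2⟩ | ⟨h1, h2⟩
  · by_cases hn : fracPart y = 0
    · exact absurd (Or.inl ⟨fracPart_eq_zero_iff.1 hn, fracPart_eq_zero_iff.1 (h2.1 hn)⟩) hP
    · exact ⟨hn, fun hz => hn (h2.2 hz), h1⟩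
  · exact absurd (Or.inr ⟨h1, h2⟩) hP

lemma regEq_eq_of_nat (h : RegEq K y y') (hn : IsNatVal y) (hn' : ¬ ((K:ℝ≥0) < y ∧ (K:ℝ≥0) < y')) :
    y = y' := by
  rcases h with ⟨h1, h2⟩ | ⟨h1, h2⟩
  · have hz : fracPart y = 0 := fracPart_eq_zero_iff.2 hn
    have hz' : fracPart y' = 0 := h2.1 hz
    rw [← floor_add_fracPart y, ← floor_add_fracPart y', hz, hz', h1]
  · exact absurd ⟨h1, h2⟩ hn'

/-- The key region-compatibility lemma for `tauStep`. -/
lemma regEq_add_tauStep (h : RegEq K y y') (t : ℝ≥0) :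
    RegEq K (y + t) (y' + tauStep K y y' t) := by
  by_cases hP : (IsNatVal y ∧ IsNatVal y') ∨ ((K : ℝ≥0) < y ∧ (K : ℝ≥0) < y')
  · rw [tauStep, if_pos hP]
    rcases hP with ⟨hn, hn'⟩ | ⟨h1, h2⟩
    · rcases h with ⟨h1, h2⟩ | ⟨h1, h2⟩
      · have hz : fracPart y = 0 := fracPart_eq_zero_iff.2 hn
        have hz' : fracPart y' = 0 := fracPart_eq_zero_iff.2 hn'
        have hyy : y = y' := by
          rw [← floor_add_fracPart y, ← floor_add_fracPart y', hz, hz', h1]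
        rw [hyy]
        exact RegEq.refl K _
      · exact Or.inr ⟨lt_of_lt_of_le h1 le_self_add, lt_of_lt_of_le h2 le_self_add⟩
    · exact Or.inr ⟨lt_of_lt_of_le h1 le_self_add, lt_of_lt_of_le h2 le_self_add⟩
  · obtain ⟨hfy, hfy', hfl⟩ := else_info h hP
    rw [tauStep, if_neg hP]
    set fy := fracPart y with hfydef
    set fy' := fracPart y' with hfy'def
    set ft := fracPart t with hftdef
    set lam := 1 - fy with hlamdef
    set lam' := 1 - fy' with hlam'def
    have hfylt := fracPart_lt_one y
    have hfy'lt := fracPart_lt_one y'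
    have hftlt := fracPart_lt_one t
    have hlam : 0 < lam := tsub_pos_of_lt hfylt
    have hlam1 : lam < 1 := tsub_lt_self one_pos (pos_iff_ne_zero.2 hfy)
    have hlam' : 0 < lam' := tsub_pos_of_lt hfy'lt
    have hlam1' : lam' < 1 := tsub_lt_self one_pos (pos_iff_ne_zero.2 hfy')
    set s' := fScale lam lam' ft with hs'def
    have hey : y + t = ((⌊y⌋₊ + ⌊t⌋₊ : ℕ) : ℝ≥0) + (fy + ft) := by
      conv_lhs => rw [← floor_add_fracPart y, ← floor_add_fracPart t]
      push_cast; ring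
    have hey' : y' + ((⌊t⌋₊ : ℝ≥0) + s') = ((⌊y'⌋₊ + ⌊t⌋₊ : ℕ) : ℝ≥0) + (fy' + s') := by
      conv_lhs => rw [← floor_add_fracPart y']
      push_cast; ring
    rcases lt_trichotomy ft lam with hcs | hcs | hcs
    · have h1 : fy + ft < 1 := by
        rw [hlamdef] at hcs; rwa [lt_tsub_iff_left] at hcs
      have h2 : s' < lam' := (fScale_lt_of_lt hlam hcs).resolve_right hlam'.ne'
      have h1' : fy' + s' < 1 := by
        rw [hlam'def] at h2; rwa [lt_tsub_iff_left] at h2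
      obtain ⟨d1, d2⟩ := floor_frac_decomp (n := ⌊y⌋₊ + ⌊t⌋₊) h1
      obtain ⟨d1', d2'⟩ := floor_frac_decomp (n := ⌊y'⌋₊ + ⌊t⌋₊) h1'
      left
      rw [hey, hey', d1, d1', d2, d2']
      refine ⟨by rw [hfl], iff_of_false ?_ ?_⟩
      · intro hz
        exact hfy (by simpa using (add_eq_zero.1 hz).1)
      · intro hz
        exact hfy' (by simpa using (add_eq_zero.1 hz).1)
    · have h1 : fy + ft = 1 := by
        rw [hcs, hlamdef, add_tsub_cancel_of_le hfylt.le]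
      have h2 : s' = lam' := by rw [hs'def, hcs, fScale_eq_of_eq hlam]
      have h1' : fy' + s' = 1 := by
        rw [h2, hlam'def, add_tsub_cancel_of_le hfy'lt.le]
      have ee : y + t = y' + ((⌊t⌋₊ : ℝ≥0) + s') := by
        rw [hey, hey', h1, h1', hfl]
      rw [ee]
      exact RegEq.refl K _
    · have h1 : 1 < fy + ft := by
        rw [hlamdef] at hcs
        exact (tsub_lt_iff_left hfylt.le).1 hcs
      have h2 : lam' < s' := fScale_gt_of_gt hlam1 hlam' hlam1' hcs
      have h1' : 1 < fy' + s' := by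
        rw [hlam'def] at h2
        exact (tsub_lt_iff_left hfy'lt.le).1 h2
      have hs'lt : s' < 1 := fScale_lt_one hlam hlam1 hlam1' hftlt
      obtain ⟨g, hg⟩ : ∃ g, fy + ft = 1 + g :=
        ⟨fy + ft - 1, (add_tsub_cancel_of_le h1.le).symm⟩
      obtain ⟨g', hg'⟩ : ∃ g', fy' + s' = 1 + g' :=
        ⟨fy' + s' - 1, (add_tsub_cancel_of_le h1'.le).symm⟩
      have hgpos : g ≠ 0 := by
        rintro rfl; rw [add_zero] at hg; exact h1.ne' hg
      have hg'pos : g' ≠ 0 := by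
        rintro rfl; rw [add_zero] at hg'; exact h1'.ne' hg'
      have hglt : g < 1 := by
        have hh : fy + ft < 1 + 1 := add_lt_add hfylt hftlt
        rw [hg] at hh
        exact lt_of_add_lt_add_left hh
      have hg'lt : g' < 1 := by
        have hh : fy' + s' < 1 + 1 := add_lt_add hfy'lt hs'lt
        rw [hg'] at hh
        exact lt_of_add_lt_add_left hh
      have he2 : y + t = ((⌊y⌋₊ + ⌊t⌋₊ + 1 : ℕ) : ℝ≥0) + g := by
        rw [hey, hg]; push_cast; ring
      have he2' : y' + ((⌊t⌋₊ : ℝ≥0) + s') = ((⌊y'⌋₊ + ⌊t⌋₊ + 1 : ℕ) : ℝ≥0) + g' := by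
        rw [hey', hg']; push_cast; ring
      obtain ⟨d1, d2⟩ := floor_frac_decomp (n := ⌊y⌋₊ + ⌊t⌋₊ + 1) hglt
      obtain ⟨d1', d2'⟩ := floor_frac_decomp (n := ⌊y'⌋₊ + ⌊t⌋₊ + 1) hg'lt
      left
      rw [he2, he2', d1, d1', d2, d2']
      exact ⟨by rw [hfl], iff_of_false hgpos hg'pos⟩

lemma tauStep_self (K : ℕ) (y t : ℝ≥0) : tauStep K y y t = t := by
  by_cases hP : (IsNatVal y ∧ IsNatVal y) ∨ ((K : ℝ≥0) < y ∧ (K : ℝ≥0) < y)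
  · rw [tauStep, if_pos hP]
  · obtain ⟨hfy, -, -⟩ := else_info (RegEq.refl K y) hP
    rw [tauStep, if_neg hP]
    rw [fScale_self (tsub_pos_of_lt (fracPart_lt_one y))
      (tsub_lt_self one_pos (pos_iff_ne_zero.2 hfy)), floor_add_fracPart]

lemma tauStep_inv (h : RegEq K y y') (t : ℝ≥0) :
    tauStep K y' y (tauStep K y y' t) = t := by
  by_cases hP : (IsNatVal y ∧ IsNatVal y') ∨ ((K : ℝ≥0) < y ∧ (K : ℝ≥0) < y')
  · have hP' : (IsNatVal y' ∧ IsNatVal y) ∨ ((K : ℝ≥0) < y' ∧ (K : ℝ≥0) < y) := by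
      tauto
    have ht : tauStep K y y' t = t := by rw [tauStep, if_pos hP]
    rw [ht, tauStep, if_pos hP']
  · have hP' : ¬ ((IsNatVal y' ∧ IsNatVal y) ∨ ((K : ℝ≥0) < y' ∧ (K : ℝ≥0) < y)) := by
      tauto
    obtain ⟨hfy, hfy', hfl⟩ := else_info h hP
    have hlam : 0 < 1 - fracPart y := tsub_pos_of_lt (fracPart_lt_one y)
    have hlam1 : 1 - fracPart y < 1 := tsub_lt_self one_pos (pos_iff_ne_zero.2 hfy)
    have hlam' : 0 < 1 - fracPart y' := tsub_pos_of_lt (fracPart_lt_one y')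
    have hlam1' : 1 - fracPart y' < 1 := tsub_lt_self one_pos (pos_iff_ne_zero.2 hfy')
    have hs' : fScale (1 - fracPart y) (1 - fracPart y') (fracPart t) < 1 :=
      fScale_lt_one hlam hlam1 hlam1' (fracPart_lt_one t)
    obtain ⟨d1, d2⟩ := floor_frac_decomp (n := ⌊t⌋₊) hs'
    have ht : tauStep K y y' t
        = (⌊t⌋₊ : ℝ≥0) + fScale (1 - fracPart y) (1 - fracPart y') (fracPart t) := by
      rw [tauStep, if_neg hP]
    rw [ht, tauStep, if_neg hP', d1, d2,
      fScale_comp hlam hlam1 hlam' hlam1', fScale_self hlam hlam1, floor_add_fracPart]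

lemma tauStep_comp (h1 : RegEq K y y') (h2 : RegEq K y' y'') (t : ℝ≥0) :
    tauStep K y' y'' (tauStep K y y' t) = tauStep K y y'' t := by
  by_cases hgt : ((K : ℝ≥0) < y ∧ (K : ℝ≥0) < y')
  · have hy'' : (K : ℝ≥0) < y'' := regEq_gtK h2 hgt.2
    have ht : tauStep K y y' t = t := by rw [tauStep, if_pos (Or.inr hgt)]
    rw [ht, tauStep, if_pos (Or.inr ⟨hgt.2, hy''⟩), tauStep, if_pos (Or.inr ⟨hgt.1, hy''⟩)]
  · by_cases hnn : IsNatVal y ∧ IsNatVal y'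
    · have hyy : y = y' := regEq_eq_of_nat h1 hnn.1 hgt
      subst hyy
      rw [tauStep_self]
    · have hP : ¬ ((IsNatVal y ∧ IsNatVal y') ∨ ((K : ℝ≥0) < y ∧ (K : ℝ≥0) < y')) := by
        tauto
      obtain ⟨hfy, hfy', hfl⟩ := else_info h1 hP
      have hP2 : ¬ ((IsNatVal y' ∧ IsNatVal y'') ∨ ((K : ℝ≥0) < y' ∧ (K : ℝ≥0) < y'')) := by
        rintro (⟨hn, -⟩ | ⟨ha, hb⟩)
        · exact hfy' (fracPart_eq_zero_iff.2 hn)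
        · exact hgt ⟨regEq_gtK (RegEq.symm h1) ha, ha⟩
      obtain ⟨-, hfy'', hfl2⟩ := else_info h2 hP2
      have hP3 : ¬ ((IsNatVal y ∧ IsNatVal y'') ∨ ((K : ℝ≥0) < y ∧ (K : ℝ≥0) < y'')) := by
        rintro (⟨hn, -⟩ | ⟨ha, hb⟩)
        · exact hfy (fracPart_eq_zero_iff.2 hn)
        · exact hgt ⟨ha, regEq_gtK h1 ha⟩
      have hlam : 0 < 1 - fracPart y := tsub_pos_of_lt (fracPart_lt_one y)
      have hlam1 : 1 - fracPart y < 1 := tsub_lt_self one_pos (pos_iff_ne_zero.2 hfy)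
      have hlam' : 0 < 1 - fracPart y' := tsub_pos_of_lt (fracPart_lt_one y')
      have hlam1' : 1 - fracPart y' < 1 := tsub_lt_self one_pos (pos_iff_ne_zero.2 hfy')
      have hs' : fScale (1 - fracPart y) (1 - fracPart y') (fracPart t) < 1 :=
        fScale_lt_one hlam hlam1 hlam1' (fracPart_lt_one t)
      obtain ⟨d1, d2⟩ := floor_frac_decomp (n := ⌊t⌋₊) hs'
      have ht : tauStep K y y' t
          = (⌊t⌋₊ : ℝ≥0) + fScale (1 - fracPart y) (1 - fracPart y') (fracPart t) := by
        rw [tauStep, if_neg hP]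
      rw [ht, tauStep, if_neg hP2, tauStep, if_neg hP3, d1, d2,
        fScale_comp hlam hlam1 hlam' hlam1']

end tauStep
/-! ### Word-level lemmas -/

section Words
variable {A : Type} {K : ℕ}

@[simp] lemma tauWAux_nil (y y' : ℝ≥0) : tauWAux (A := A) K y y' [] = [] := rfl

lemma tauWAux_cons (y y' t : ℝ≥0) (a : A) (w : TimedWord A) :
    tauWAux K y y' ((t, a) :: w) =
      (tauStep K y y' t, a) ::
        tauWAux K (resetStep K (y + t)) (resetStep K (y' + tauStep K y y' t)) w := rfl

lemma tauWAux_self (y : ℝ≥0) (w : TimedWord A) : tauWAux K y y w = w := by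
  induction w generalizing y with
  | nil => rfl
  | cons p w ih =>
      obtain ⟨t, a⟩ := p
      rw [tauWAux_cons, tauStep_self, ih]

lemma tauWAux_inv {y y' : ℝ≥0} (h : RegEq K y y') (w : TimedWord A) :
    tauWAux K y' y (tauWAux K y y' w) = w := by
  induction w generalizing y y' with
  | nil => rfl
  | cons p w ih =>
      obtain ⟨t, a⟩ := p
      rw [tauWAux_cons, tauWAux_cons, tauStep_inv h, ih (resetStep_regEq (regEq_add_tauStep h t))]

lemma tauWAux_comp {y y' y'' : ℝ≥0} (h1 : RegEq K y y') (h2 : RegEq K y' y'')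
    (w : TimedWord A) :
    tauWAux K y' y'' (tauWAux K y y' w) = tauWAux K y y'' w := by
  induction w generalizing y y' y'' with
  | nil => rfl
  | cons p w ih =>
      obtain ⟨t, a⟩ := p
      rw [tauWAux_cons, tauWAux_cons, tauWAux_cons, tauStep_comp h1 h2]
      congr 1
      have e1 := resetStep_regEq (regEq_add_tauStep h1 t)
      have e2 := resetStep_regEq (regEq_add_tauStep h2 (tauStep K y y' t))
      rw [tauStep_comp h1 h2] at e2
      exact ih e1 e2

lemma tauWAux_eq_nil_iff {y y' : ℝ≥0} {w : TimedWord A} :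
    tauWAux K y y' w = [] ↔ w = [] := by
  cases w with
  | nil => simp
  | cons p w => obtain ⟨t, a⟩ := p; rw [tauWAux_cons]; simp

lemma mem_tauWAux_image {y y' : ℝ≥0} (h : RegEq K y y') {S : Set (TimedWord A)}
    {z : TimedWord A} : z ∈ tauWAux K y y' '' S ↔ tauWAux K y' y z ∈ S := by
  constructor
  · rintro ⟨w, hw, rfl⟩
    rwa [tauWAux_inv h]
  · intro hz
    exact ⟨tauWAux K y' y z, hz, tauWAux_inv (RegEq.symm h) z⟩

lemma cKAux_append (v : ℝ≥0) (d1 d2 : Timestamp) :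
    cKAux K v (d1 ++ d2) = cKAux K (cKAux K v d1) d2 := by
  induction d1 generalizing v with
  | nil => rfl
  | cons t d ih => rw [List.cons_append]; exact ih _

@[simp] lemma cKW_nil : cKW (A := A) K [] = 0 := rfl

lemma cKW_append_single (u : TimedWord A) (t : ℝ≥0) (a : A) :
    cKW K (u ++ [(t, a)]) = resetStep K (cKW K u + t) := by
  unfold cKW cK
  rw [List.map_append, cKAux_append]
  rfl

end Words

/-! ### Steps lemmas -/

section StepsLemmas
variable {A : Type} {M : TA A}

lemma steps_nil_inv {c c' : M.Q × ℝ≥0} (h : Steps M c [] c') : c' = c := by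
  cases h; rfl

lemma steps_cons_inv {q : M.Q} {ν t : ℝ≥0} {a : A} {w : TimedWord A} {c' : M.Q × ℝ≥0}
    (h : Steps M (q, ν) ((t, a) :: w) c') :
    ∃ θ ∈ M.trans, θ.src = q ∧ θ.lab = a ∧ θ.guard.sat (ν + t) ∧
      Steps M (θ.dst, if θ.reset then 0 else ν + t) w c' := by
  cases h with
  | cons θ hθ hsrc hlab hg hrest => exact ⟨θ, hθ, hsrc, hlab, hg, hrest⟩

lemma steps_append {c c' c'' : M.Q × ℝ≥0} {u w : TimedWord A}
    (h1 : Steps M c u c') (h2 : Steps M c' w c'') : Steps M c (u ++ w) c'' := by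
  induction h1 with
  | nil => exact h2
  | cons θ hθ hsrc hlab hg hrest ih => exact Steps.cons θ hθ hsrc hlab hg (ih h2)

lemma steps_append_split {c c'' : M.Q × ℝ≥0} {u w : TimedWord A}
    (h : Steps M c (u ++ w) c'') : ∃ c', Steps M c u c' ∧ Steps M c' w c'' := by
  induction u generalizing c with
  | nil => exact ⟨c, Steps.nil c, h⟩
  | cons p u ih =>
      obtain ⟨t, a⟩ := p
      obtain ⟨q, ν⟩ := c
      rw [List.cons_append] at h
      obtain ⟨θ, hθ, hsrc, hlab, hg, hrest⟩ := steps_cons_inv h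
      obtain ⟨c', h1, h2⟩ := ih hrest
      exact ⟨c', Steps.cons θ hθ hsrc hlab hg h1, h2⟩

end StepsLemmas

/-! ### Guard satisfaction and regions -/

section Guards

lemma sat_det {K : ℕ} {x z : ℝ≥0} (h : RegEq K x z) {φ : CC} (hφ : φ.maxConst ≤ K) :
    φ.sat x ↔ φ.sat z := by
  induction φ with
  | lt m =>
      simp only [CC.sat]
      rcases h with ⟨h1, h2⟩ | ⟨h1, h2⟩
      · rw [lt_natCast_iff, lt_natCast_iff, h1]
      · have hm : (m : ℝ≥0) ≤ K := Nat.cast_le.2 (by simpa [CC.maxConst] using hφ)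
        exact iff_of_false (not_lt.2 (hm.trans h1.le)) (not_lt.2 (hm.trans h2.le))
  | gt m =>
      simp only [CC.sat]
      rcases h with ⟨h1, h2⟩ | ⟨h1, h2⟩
      · rw [natCast_lt_iff, natCast_lt_iff, h1]
        exact or_congr Iff.rfl (and_congr Iff.rfl (not_congr h2))
      · have hm : (m : ℝ≥0) ≤ K := Nat.cast_le.2 (by simpa [CC.maxConst] using hφ)
        exact iff_of_true (lt_of_le_of_lt hm h1) (lt_of_le_of_lt hm h2)
  | eq m =>
      simp only [CC.sat]
      rcases h with ⟨h1, h2⟩ | ⟨h1, h2⟩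
      · rw [eq_natCast_iff, eq_natCast_iff, h1]
        exact and_congr Iff.rfl h2
      · have hm : (m : ℝ≥0) ≤ K := Nat.cast_le.2 (by simpa [CC.maxConst] using hφ)
        constructor
        · rintro rfl; exact absurd h1 (not_lt.2 hm)
        · rintro rfl; exact absurd h2 (not_lt.2 hm)
  | and φ ψ ih1 ih2 =>
      simp only [CC.maxConst, max_le_iff] at hφ
      simp only [CC.sat]
      rw [ih1 hφ.1, ih2 hφ.2]

lemma floor_le_self_nat {K : ℕ} {x : ℝ≥0} (hx : x ≤ (K : ℝ≥0)) : ⌊x⌋₊ ≤ K := by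
  have := Nat.floor_le_floor hx
  rwa [Nat.floor_natCast] at this

lemma sat_phiOf_iff {K : ℕ} {x z : ℝ≥0} : (phiOf K x).sat z ↔ RegEq K x z := by
  unfold phiOf
  by_cases hx : x ≤ (K : ℝ≥0)
  · rw [if_pos hx]
    by_cases hn : IsNatVal x
    · rw [if_pos hn]
      simp only [CC.sat]
      have hxf : x = (⌊x⌋₊ : ℝ≥0) := by
        obtain ⟨m, rfl⟩ := hn; rw [Nat.floor_natCast]
      constructor
      · intro hz
        rw [← hxf] at hz
        rw [hz]
        exact RegEq.refl K x
      · intro h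
        exact regEq_natCast h hxf (floor_le_self_nat hx)
    · rw [if_neg hn]
      simp only [CC.sat]
      have hfx : fracPart x ≠ 0 := fun hz => hn (fracPart_eq_zero_iff.1 hz)
      constructor
      · rintro ⟨h1, h2⟩
        rcases natCast_lt_iff.1 h1 with h3 | ⟨h3, h4⟩
        · exfalso
          have := lt_natCast_iff.1 h2
          omega
        · exact Or.inl ⟨h3.symm, iff_of_false hfx h4⟩
      · rintro (⟨h1, h2⟩ | ⟨h1, h2⟩)
        · constructor
          · exact natCast_lt_iff.2 (Or.inr ⟨h1.symm, fun hz => hfx (h2.2 hz)⟩)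
          · rw [lt_natCast_iff]
            omega
        · exact absurd h1 (not_lt.2 hx)
  · rw [if_neg hx]
    simp only [CC.sat]
    constructor
    · intro hz
      exact Or.inr ⟨not_le.1 hx, hz⟩
    · intro h
      exact regEq_gtK h (not_le.1 hx)

lemma phiOf_maxConst_le {K : ℕ} {x : ℝ≥0} : (phiOf K x).maxConst ≤ K + 1 := by
  unfold phiOf
  by_cases hx : x ≤ (K : ℝ≥0)
  · rw [if_pos hx]
    have := floor_le_self_nat hx
    by_cases hn : IsNatVal x
    · rw [if_pos hn]; simp [CC.maxConst]; omega
    · rw [if_neg hn]; simp [CC.maxConst]; omega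
  · rw [if_neg hx]; simp [CC.maxConst]

end Guards

/-! ### Basic properties of `≈^{L,K}` -/

section ApproxBasic
variable {A : Type} {L : Set (TimedWord A)} {K : ℕ}

lemma tauW_eq_tauWAux (x x' : ℝ≥0) (w : TimedWord A) :
    tauW K x x' w = tauWAux K (resetStep K x) (resetStep K x') w := rfl

lemma approxLK_refl (L : Set (TimedWord A)) (K : ℕ) (u : TimedWord A) : ApproxLK L K u u := by
  refine ⟨RegEq.refl _ _, ?_⟩
  have h : ∀ w : TimedWord A, tauW K (cKW K u) (cKW K u) w = w := fun w => tauWAux_self _ w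
  rw [show tauW K (cKW K u) (cKW K u) = id from funext h, Set.image_id]

lemma approxLK_Lpres {u v : TimedWord A} (h : ApproxLK L K u v) : u ∈ L ↔ v ∈ L := by
  obtain ⟨hreg, himg⟩ := h
  have hu : u ∈ L ↔ ([] : TimedWord A) ∈ residual L u := by simp [residual]
  have hv : v ∈ L ↔ ([] : TimedWord A) ∈ residual L v := by simp [residual]
  rw [hu, hv, ← himg]
  constructor
  · intro h0
    exact ⟨[], h0, rfl⟩
  · rintro ⟨w, hw, hww⟩
    rwa [tauWAux_eq_nil_iff.1 hww] at hw

lemma regEq_of_eqvGen {u v : TimedWord A}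
    (h : Relation.EqvGen (ApproxLK L K) u v) : RegEq K (cKW K u) (cKW K v) := by
  induction h with
  | rel _ _ hr => exact hr.1
  | refl _ => exact RegEq.refl _ _
  | symm _ _ _ ih => exact ih.symm
  | trans _ _ _ _ _ ih1 ih2 => exact ih1.trans ih2

lemma eqvGen_Lpres {u v : TimedWord A}
    (h : Relation.EqvGen (ApproxLK L K) u v) : u ∈ L ↔ v ∈ L := by
  induction h with
  | rel _ _ hr => exact approxLK_Lpres hr
  | refl _ => exact Iff.rfl
  | symm _ _ _ ih => exact ih.symm
  | trans _ _ _ _ _ ih1 ih2 => exact ih1.trans ih2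

lemma eqvGen_mono (hmono : KMonotonic K (ApproxLK L K)) {u v : TimedWord A}
    (h : Relation.EqvGen (ApproxLK L K) u v) :
    ∀ (a : A) (t t' : ℝ≥0), RegEq K (cKW K u + t) (cKW K v + t') →
      Relation.EqvGen (ApproxLK L K) (u ++ [(t, a)]) (v ++ [(t', a)]) := by
  induction h with
  | rel p q hr =>
      intro a t t' hreg
      exact Relation.EqvGen.rel _ _ ((hmono p q hr).2 a t t' hreg)
  | refl p =>
      intro a t t' hreg
      exact Relation.EqvGen.rel _ _ ((hmono p p (approxLK_refl L K p)).2 a t t' hreg)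
  | symm p q hpq ih =>
      intro a t t' hreg
      exact Relation.EqvGen.symm _ _ (ih a t' t hreg.symm)
  | trans p q o hpq hqo ih1 ih2 =>
      intro a t t' hreg
      have hpq' : RegEq K (cKW K p) (cKW K q) := regEq_of_eqvGen hpq
      set t'' := tauStep K (cKW K p) (cKW K q) t with ht''
      have h1 : RegEq K (cKW K p + t) (cKW K q + t'') := regEq_add_tauStep hpq' t
      have h2 : RegEq K (cKW K q + t'') (cKW K o + t') := h1.symm.trans hreg
      exact Relation.EqvGen.trans _ _ _ (ih1 a t t'' h1) (ih2 a t'' t' h2)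

end ApproxBasic

/-! ### The backward direction -/

section Backward
variable {A : Type} [Finite A] {L : Set (TimedWord A)} {K : ℕ}

lemma phiOf_mem_guardSet (K : ℕ) (x : ℝ≥0) :
    phiOf K x ∈ ((fun m => CC.eq m) '' Set.Iic K ∪
      ((fun m => CC.and (CC.gt m) (CC.lt (m + 1))) '' Set.Iic K ∪ {CC.gt K})) := by
  unfold phiOf
  by_cases hx : x ≤ (K : ℝ≥0)
  · rw [if_pos hx]
    by_cases hn : IsNatVal x
    · rw [if_pos hn]
      exact Or.inl ⟨⌊x⌋₊, floor_le_self_nat hx, rfl⟩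
    · rw [if_neg hn]
      exact Or.inr (Or.inl ⟨⌊x⌋₊, floor_le_self_nat hx, rfl⟩)
  · rw [if_neg hx]
    exact Or.inr (Or.inr rfl)

theorem backward_direction (L : Set (TimedWord A)) (K : ℕ)
    (hmono : KMonotonic K (ApproxLK L K)) (hfin : FiniteIndex (ApproxLK L K)) :
    ∃ M : TA A, M.IsFinite ∧ M.IsIRTA ∧ M.Lang = L := by
  classical
  set r := ApproxLK L K with hr
  set s := Relation.EqvGen.setoid r with hs
  set M := Aapprox L K s with hM
  have hexact : ∀ {u v : TimedWord A}, Quotient.mk s u = Quotient.mk s v →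
      Relation.EqvGen r u v := fun h => Quotient.exact h
  -- finiteness of states
  have hQfin : Finite M.Q := by
    have : Finite (↥(Set.range fun u : TimedWord A => {v : TimedWord A | r u v})) :=
      hfin.to_subtype
    refine Finite.of_injective
      (fun q : Quotient s => (⟨{v | r q.out v}, ⟨q.out, rfl⟩⟩ :
        ↥(Set.range fun u : TimedWord A => {v : TimedWord A | r u v}))) ?_
    intro q q' hqq
    have hset : {v | r q.out v} = {v | r q'.out v} := by
      simpa using congrArg Subtype.val hqq
    have hmem : r q.out q'.out := by
      have : q'.out ∈ {v | r q'.out v} := approxLK_refl L K q'.out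
      rw [← hset] at this
      exact this
    exact (Quotient.out_eq q).symm.trans
      ((Quotient.sound (s := s) (a := q.out) (b := q'.out) (Relation.EqvGen.rel _ _ hmem)).trans
        (Quotient.out_eq q'))
  have hnewclock : ∀ (x x' : ℝ≥0) (b : Bool), RegEq K x x' →
      (b = true ↔ ∃ m : ℕ, m ≤ K ∧ x = (m : ℝ≥0)) →
      (if b then 0 else x') = resetStep K x' := by
    intro x x' b hreg hb
    cases b with
    | true =>
        obtain ⟨m, hm, hxm⟩ := hb.1 rfl
        have : x' = (m : ℝ≥0) := regEq_natCast hreg hxm hm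
        rw [resetStep, if_pos (⟨m, hm, this⟩ : ∃ m : ℕ, m ≤ K ∧ x' = (m : ℝ≥0))]
        simp
    | false =>
        have hnx : ¬ ∃ m : ℕ, m ≤ K ∧ x = (m : ℝ≥0) := by
          intro hPx
          exact Bool.false_ne_true (hb.2 hPx)
        have hnx' : ¬ ∃ m : ℕ, m ≤ K ∧ x' = (m : ℝ≥0) := resetStep_natCast_iff hreg hnx
        rw [resetStep, if_neg hnx']
        simp
  -- soundness of runs
  have hsnd : ∀ (w w₀ u₀ : TimedWord A) (c' : M.Q × ℝ≥0),
      Relation.EqvGen r u₀ w₀ →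
      Steps M (Quotient.mk s u₀, cKW K w₀) w c' →
      ∃ u', c'.1 = Quotient.mk s u' ∧ Relation.EqvGen r u' (w₀ ++ w) ∧
        c'.2 = cKW K (w₀ ++ w) := by
    intro w
    induction w with
    | nil =>
        intro w₀ u₀ c' hE hrun
        rw [steps_nil_inv hrun]
        exact ⟨u₀, rfl, by simpa using hE, by simp⟩
    | cons p w ih =>
        obtain ⟨t₀, a⟩ := p
        intro w₀ u₀ c' hE hrun
        obtain ⟨θ, hθ, hsrc, hlab, hg, hrest⟩ := steps_cons_inv hrun
        obtain ⟨u₁, a₁, t₁, hsrc2, hdst, hlab2, hguard, hreset⟩ := hθ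
        have ha : a₁ = a := by rw [← hlab2, hlab]
        subst ha
        have hE1 : Relation.EqvGen r u₁ w₀ :=
          Relation.EqvGen.trans _ _ _ (hexact (hsrc2.symm.trans hsrc)) hE
        have hreg1 : RegEq K (cKW K u₁ + t₁) (cKW K w₀ + t₀) := by
          rw [hguard] at hg
          exact sat_phiOf_iff.1 hg
        have hE2 : Relation.EqvGen r (u₁ ++ [(t₁, a₁)]) (w₀ ++ [(t₀, a₁)]) :=
          eqvGen_mono hmono hE1 a₁ t₁ t₀ hreg1
        have hck : (if θ.reset then 0 else cKW K w₀ + t₀) = cKW K (w₀ ++ [(t₀, a₁)]) := by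
          rw [cKW_append_single]
          exact hnewclock _ _ _ hreg1 hreset
        rw [hdst, hck] at hrest
        obtain ⟨u', h1, h2, h3⟩ := ih (w₀ ++ [(t₀, a₁)]) (u₁ ++ [(t₁, a₁)]) c' hE2 hrest
        rw [List.append_assoc] at h2 h3
        exact ⟨u', h1, by simpa using h2, by simpa using h3⟩
  -- construction of runs
  have hcmp : ∀ w : TimedWord A, ∃ u', Relation.EqvGen r u' w ∧
      Steps M (M.init, 0) w (Quotient.mk s u', cKW K w) := by
    intro w
    induction w using List.reverseRecOn with
    | nil => exact ⟨[], Relation.EqvGen.refl _, Steps.nil _⟩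
    | append_singleton w₀ p ih =>
        obtain ⟨t₀, a⟩ := p
        obtain ⟨u', hE, hrun⟩ := ih
        have hreg0 : RegEq K (cKW K u') (cKW K w₀) := regEq_of_eqvGen hE
        set t₁ := tauStep K (cKW K w₀) (cKW K u') t₀ with ht₁
        have hreg : RegEq K (cKW K w₀ + t₀) (cKW K u' + t₁) :=
          regEq_add_tauStep hreg0.symm t₀
        set P := ∃ m : ℕ, m ≤ K ∧ cKW K u' + t₁ = (m : ℝ≥0) with hP
        set b := if P then true else false with hb
        have hbiff : b = true ↔ P := by
          rw [hb]
          by_cases h : P <;> simp [h]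
        set θ : TTrans M.Q A :=
          ⟨Quotient.mk s u', Quotient.mk s (u' ++ [(t₁, a)]), a,
            phiOf K (cKW K u' + t₁), b⟩ with hθdef
        have hθmem : θ ∈ M.trans := ⟨u', a, t₁, rfl, rfl, rfl, rfl, hbiff⟩
        have hg : θ.guard.sat (cKW K w₀ + t₀) := sat_phiOf_iff.2 hreg.symm
        have hck : (if θ.reset then 0 else cKW K w₀ + t₀) = cKW K (w₀ ++ [(t₀, a)]) := by
          rw [cKW_append_single]
          exact hnewclock _ _ _ hreg.symm (by simpa using hbiff)
        have hstep : Steps M (Quotient.mk s u', cKW K w₀) [(t₀, a)]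
            (Quotient.mk s (u' ++ [(t₁, a)]), cKW K (w₀ ++ [(t₀, a)])) := by
          refine Steps.cons θ hθmem rfl rfl hg ?_
          rw [hck]
          exact Steps.nil _
        refine ⟨u' ++ [(t₁, a)], eqvGen_mono hmono hE a t₁ t₀ hreg.symm, ?_⟩
        exact steps_append hrun hstep
  refine ⟨M, ⟨hQfin, ?_⟩, ?_, ?_⟩
  -- finiteness of transitions
  · set pack : TTrans M.Q A → M.Q × M.Q × A × CC × Bool :=
      fun θ => (θ.src, θ.dst, θ.lab, θ.guard, θ.reset) with hpack
    have hpinj : Function.Injective pack := by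
      intro θ1 θ2 h
      simp only [hpack, Prod.mk.injEq] at h
      obtain ⟨h1, h2, h3, h4, h5⟩ := h
      cases θ1; cases θ2
      simp_all
    have hGfin : (((fun m => CC.eq m) '' Set.Iic K ∪
        ((fun m => CC.and (CC.gt m) (CC.lt (m + 1))) '' Set.Iic K ∪ {CC.gt K}))).Finite := by
      refine Set.Finite.union ((Set.finite_Iic K).image _) ?_
      exact Set.Finite.union ((Set.finite_Iic K).image _) (Set.finite_singleton _)
    have hSfin : ((Set.univ : Set M.Q) ×ˢ (Set.univ : Set M.Q) ×ˢ (Set.univ : Set A) ×ˢ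
        (((fun m => CC.eq m) '' Set.Iic K ∪
          ((fun m => CC.and (CC.gt m) (CC.lt (m + 1))) '' Set.Iic K ∪ {CC.gt K}))) ×ˢ
        (Set.univ : Set Bool)).Finite := by
      have := hQfin
      exact Set.Finite.prod Set.finite_univ (Set.Finite.prod Set.finite_univ
        (Set.Finite.prod Set.finite_univ (Set.Finite.prod hGfin Set.finite_univ)))
    refine Set.Finite.of_finite_image (Set.Finite.subset hSfin ?_) hpinj.injOn
    rintro x ⟨θ, hθ, rfl⟩
    obtain ⟨u, a, t, hsrc, hdst, hlab, hguard, hreset⟩ := hθ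
    refine ⟨trivial, trivial, trivial, ?_, trivial⟩
    show θ.guard ∈ _
    rw [hguard]
    exact phiOf_mem_guardSet K _
  -- IRTA property
  · intro θ hθ hres
    obtain ⟨u, a, t, hsrc, hdst, hlab, hguard, hreset⟩ := hθ
    obtain ⟨m, hm, hval⟩ := hreset.1 hres
    refine ⟨m, ?_⟩
    rw [hguard]
    unfold phiOf
    have hle : cKW K u + t ≤ (K : ℝ≥0) := by
      rw [hval]; exact Nat.cast_le.2 hm
    rw [if_pos hle, if_pos ⟨m, hval⟩]
    congr 1
    rw [hval, Nat.floor_natCast]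
  -- language equality
  · ext w
    constructor
    · rintro ⟨q, ν, hrun, hfinal⟩
      have h0 : (0 : ℝ≥0) = cKW K ([] : TimedWord A) := rfl
      have hrun' : Steps M (Quotient.mk s ([] : TimedWord A), cKW K ([] : TimedWord A))
          w (q, ν) := hrun
      obtain ⟨u', h1, h2, -⟩ :=
        hsnd w [] [] (q, ν) (Relation.EqvGen.refl _) hrun'
      obtain ⟨u'', hq2, hu''L⟩ := hfinal
      have : Relation.EqvGen r u'' u' := hexact (by rw [← hq2, ← h1])
      have hEw : Relation.EqvGen r u'' w :=
        Relation.EqvGen.trans _ _ _ this (by simpa using h2)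
      exact (eqvGen_Lpres hEw).1 hu''L
    · intro hw
      obtain ⟨u', hE, hrun⟩ := hcmp w
      exact ⟨Quotient.mk s u', cKW K w, hrun, u', rfl, (eqvGen_Lpres hE).2 hw⟩

end Backward

/-! ### Forward direction: simulation lemmas -/

section Forward
variable {A : Type} {M : TA A} {K : ℕ}

lemma mem_langFrom_iff {c : M.Q × ℝ≥0} {w : TimedWord A} :
    w ∈ M.LangFrom c ↔ ∃ q' : M.Q, ∃ ν' : ℝ≥0, Steps M c w (q', ν') ∧ q' ∈ M.final :=
  Iff.rfl

lemma langFrom_gtK_mono (hirta : M.IsIRTA) (hK : ∀ θ ∈ M.trans, θ.guard.maxConst ≤ K) :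
    ∀ (w : TimedWord A) (q : M.Q) (ν ν' : ℝ≥0), (K : ℝ≥0) < ν → (K : ℝ≥0) < ν' →
      w ∈ M.LangFrom (q, ν) → w ∈ M.LangFrom (q, ν') := by
  intro w
  induction w with
  | nil =>
      intro q ν ν' hν hν' hw
      obtain ⟨q', ν'', hst, hfin⟩ := hw
      have h := steps_nil_inv hst
      have h2 : q' = q := congrArg Prod.fst h
      exact ⟨q, ν', Steps.nil _, by rwa [← h2]⟩
  | cons p w ih =>
      obtain ⟨t, a⟩ := p
      intro q ν ν' hν hν' hw
      obtain ⟨qf, νf, hst, hfin⟩ := hw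
      obtain ⟨θ, hθ, hsrc, hlab, hg, hrest⟩ := steps_cons_inv hst
      have hνt : (K : ℝ≥0) < ν + t := lt_of_lt_of_le hν le_self_add
      have hνt' : (K : ℝ≥0) < ν' + t := lt_of_lt_of_le hν' le_self_add
      have hg' : θ.guard.sat (ν' + t) :=
        (sat_det (Or.inr ⟨hνt, hνt'⟩) (hK θ hθ)).1 hg
      have hres : θ.reset = false := by
        by_contra hb
        have hb' : θ.reset = true := by
          cases hre : θ.reset
          · exact absurd hre hb
          · rfl
        obtain ⟨m, hm⟩ := hirta θ hθ hb'
        rw [hm] at hg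
        have hmK : m ≤ K := by
          have := hK θ hθ
          rw [hm] at this
          simpa [CC.maxConst] using this
        rw [CC.sat] at hg
        rw [hg] at hνt
        exact absurd (Nat.cast_le.2 hmK) (not_le.2 hνt)
      rw [hres] at hrest
      simp only [Bool.false_eq_true, if_false] at hrest
      have hmem : w ∈ M.LangFrom (θ.dst, ν + t) := ⟨qf, νf, hrest, hfin⟩
      obtain ⟨qf', νf', hst2, hfin2⟩ := ih θ.dst (ν + t) (ν' + t) hνt hνt' hmem
      refine ⟨qf', νf', Steps.cons θ hθ hsrc hlab hg' ?_, hfin2⟩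
      rw [hres]
      simpa using hst2

lemma cKAux_cons (v t : ℝ≥0) (d : Timestamp) :
    cKAux K v (t :: d) = cKAux K (resetStep K (v + t)) d := rfl

lemma reach_decomp (hirta : M.IsIRTA) (hK : ∀ θ ∈ M.trans, θ.guard.maxConst ≤ K) :
    ∀ (w : TimedWord A) (q₀ : M.Q) (y : ℝ≥0) (c : ℕ) (cf : M.Q × ℝ≥0),
      Steps M (q₀, y + (c : ℝ≥0)) w cf →
      ∃ c' : ℕ, cf.2 = cKAux K y (w.map Prod.fst) + (c' : ℝ≥0) := by
  intro w
  induction w with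
  | nil =>
      intro q₀ y c cf hst
      rw [steps_nil_inv hst]
      exact ⟨c, rfl⟩
  | cons p w ih =>
      obtain ⟨t, a⟩ := p
      intro q₀ y c cf hst
      obtain ⟨θ, hθ, hsrc, hlab, hg, hrest⟩ := steps_cons_inv hst
      rw [List.map_cons, cKAux_cons]
      cases hres : θ.reset with
      | true =>
          obtain ⟨m, hm⟩ := hirta θ hθ hres
          rw [hm, CC.sat] at hg
          have hmK : m ≤ K := by
            have := hK θ hθ
            rw [hm] at this
            simpa [CC.maxConst] using this
          have hcm : c ≤ m := by
            have h1 : (c : ℝ≥0) ≤ (m : ℝ≥0) := by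
              rw [← hg]
              calc (c : ℝ≥0) ≤ y + c := le_add_self
                _ ≤ y + c + t := le_self_add
            exact_mod_cast h1
          have hyt : y + t = ((m - c : ℕ) : ℝ≥0) := by
            have h1 : y + t + (c : ℝ≥0) = (m : ℝ≥0) := by
              rw [← hg]; ring
            have h2 : ((m - c : ℕ) : ℝ≥0) + (c : ℝ≥0) = (m : ℝ≥0) := by
              rw [← Nat.cast_add]
              congr 1
              omega
            have := h1.trans h2.symm
            exact add_right_cancel this
          have hrs : resetStep K (y + t) = 0 := by
            rw [resetStep, if_pos ⟨m - c, by omega, hyt⟩]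
          rw [hres] at hrest
          simp only [if_true] at hrest
          rw [hrs]
          have hrest' : Steps M (θ.dst, (0 : ℝ≥0) + ((0 : ℕ) : ℝ≥0)) w cf := by
            simpa using hrest
          exact ih θ.dst 0 0 cf hrest'
      | false =>
          rw [hres] at hrest
          simp only [Bool.false_eq_true, if_false] at hrest
          by_cases hr2 : ∃ m' : ℕ, m' ≤ K ∧ y + t = (m' : ℝ≥0)
          · obtain ⟨m', hm', hym⟩ := hr2
            have hrs : resetStep K (y + t) = 0 := by
              rw [resetStep, if_pos ⟨m', hm', hym⟩]
            rw [hrs]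
            have hrest' : Steps M (θ.dst, (0 : ℝ≥0) + ((m' + c : ℕ) : ℝ≥0)) w cf := by
              have : y + (c : ℝ≥0) + t = (0 : ℝ≥0) + ((m' + c : ℕ) : ℝ≥0) := by
                push_cast
                rw [zero_add, ← hym]; ring
              rwa [this] at hrest
            exact ih θ.dst 0 (m' + c) cf hrest'
          · have hrs : resetStep K (y + t) = y + t := by
              rw [resetStep, if_neg hr2]
            rw [hrs]
            have hrest' : Steps M (θ.dst, (y + t) + (c : ℝ≥0)) w cf := by
              have : y + (c : ℝ≥0) + t = (y + t) + (c : ℝ≥0) := by ring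
              rwa [this] at hrest
            exact ih θ.dst (y + t) c cf hrest'

lemma steps_tau_fwd (hirta : M.IsIRTA) (hK : ∀ θ ∈ M.trans, θ.guard.maxConst ≤ K) :
    ∀ (w : TimedWord A) (y y' : ℝ≥0) (c : ℕ) (q : M.Q), RegEq K y y' →
      w ∈ M.LangFrom (q, y + (c : ℝ≥0)) →
      tauWAux K y y' w ∈ M.LangFrom (q, y' + (c : ℝ≥0)) := by
  intro w
  induction w with
  | nil =>
      intro y y' c q hreg hw
      obtain ⟨q', ν', hst, hfin⟩ := hw
      have := steps_nil_inv hst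
      have h2 : q' = q := congrArg Prod.fst this
      exact ⟨q, y' + c, Steps.nil _, by rwa [← h2]⟩
  | cons p w ih =>
      obtain ⟨t, a⟩ := p
      intro y y' c q hreg hw
      obtain ⟨qf, νf, hst, hfin⟩ := hw
      obtain ⟨θ, hθ, hsrc, hlab, hg, hrest⟩ := steps_cons_inv hst
      set t' := tauStep K y y' t with ht'
      have hreg2 : RegEq K (y + t) (y' + t') := regEq_add_tauStep hreg t
      have hregc : RegEq K (y + t + (c : ℝ≥0)) (y' + t' + (c : ℝ≥0)) :=
        regEq_add_natCast hreg2 c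
      have hgoal_sat : θ.guard.sat (y' + (c : ℝ≥0) + t') := by
        have e1 : y + (c : ℝ≥0) + t = y + t + (c : ℝ≥0) := by ring
        have e2 : y' + (c : ℝ≥0) + t' = y' + t' + (c : ℝ≥0) := by ring
        rw [e2]
        rw [e1] at hg
        exact (sat_det hregc (hK θ hθ)).1 hg
      rw [tauWAux_cons]
      cases hres : θ.reset with
      | true =>
          obtain ⟨m, hm⟩ := hirta θ hθ hres
          have hmK : m ≤ K := by
            have := hK θ hθ
            rw [hm] at this
            simpa [CC.maxConst] using this
          rw [hm, CC.sat] at hg hgoal_sat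
          have hcm : c ≤ m := by
            have h1 : (c : ℝ≥0) ≤ (m : ℝ≥0) := by
              rw [← hg]
              calc (c : ℝ≥0) ≤ y + c := le_add_self
                _ ≤ y + c + t := le_self_add
            exact_mod_cast h1
          have hyt : y + t = ((m - c : ℕ) : ℝ≥0) := by
            have h1 : y + t + (c : ℝ≥0) = (m : ℝ≥0) := by rw [← hg]; ring
            have h2 : ((m - c : ℕ) : ℝ≥0) + (c : ℝ≥0) = (m : ℝ≥0) := by
              rw [← Nat.cast_add]; congr 1; omega
            exact add_right_cancel (h1.trans h2.symm)
          have hyt' : y' + t' = ((m - c : ℕ) : ℝ≥0) := by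
            have h1 : y' + t' + (c : ℝ≥0) = (m : ℝ≥0) := by rw [← hgoal_sat]; ring
            have h2 : ((m - c : ℕ) : ℝ≥0) + (c : ℝ≥0) = (m : ℝ≥0) := by
              rw [← Nat.cast_add]; congr 1; omega
            exact add_right_cancel (h1.trans h2.symm)
          have hrs : resetStep K (y + t) = 0 := by
            rw [resetStep, if_pos ⟨m - c, by omega, hyt⟩]
          have hrs' : resetStep K (y' + t') = 0 := by
            rw [resetStep, if_pos ⟨m - c, by omega, hyt'⟩]
          rw [hres] at hrest
          simp only [if_true] at hrest
          refine ⟨qf, νf, Steps.cons θ hθ hsrc hlab (by rw [hm]; exact hgoal_sat) ?_, hfin⟩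
          rw [hres]
          simp only [if_true]
          rw [hrs, hrs', tauWAux_self]
          exact hrest
      | false =>
          rw [hres] at hrest
          simp only [Bool.false_eq_true, if_false] at hrest
          by_cases hr2 : ∃ m' : ℕ, m' ≤ K ∧ y + t = (m' : ℝ≥0)
          · obtain ⟨m', hm', hym⟩ := hr2
            have hym' : y' + t' = (m' : ℝ≥0) := regEq_natCast hreg2 hym hm'
            have hrs : resetStep K (y + t) = 0 := by
              rw [resetStep, if_pos ⟨m', hm', hym⟩]
            have hrs' : resetStep K (y' + t') = 0 := by
              rw [resetStep, if_pos ⟨m', hm', hym'⟩]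
            have hclk : y' + (c : ℝ≥0) + t' = y + (c : ℝ≥0) + t := by
              have e1 : y' + (c : ℝ≥0) + t' = (y' + t') + (c : ℝ≥0) := by ring
              have e2 : y + (c : ℝ≥0) + t = (y + t) + (c : ℝ≥0) := by ring
              rw [e1, e2, hym, hym']
            refine ⟨qf, νf, Steps.cons θ hθ hsrc hlab hgoal_sat ?_, hfin⟩
            rw [hres]
            simp only [Bool.false_eq_true, if_false]
            rw [hrs, hrs', tauWAux_self, hclk]
            exact hrest
          · have hr2' : ¬ ∃ m' : ℕ, m' ≤ K ∧ y' + t' = (m' : ℝ≥0) :=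
              resetStep_natCast_iff hreg2 hr2
            have hrs : resetStep K (y + t) = y + t := by
              rw [resetStep, if_neg hr2]
            have hrs' : resetStep K (y' + t') = y' + t' := by
              rw [resetStep, if_neg hr2']
            have hmem : w ∈ M.LangFrom (θ.dst, (y + t) + (c : ℝ≥0)) := by
              refine ⟨qf, νf, ?_, hfin⟩
              have e2 : y + (c : ℝ≥0) + t = (y + t) + (c : ℝ≥0) := by ring
              rwa [e2] at hrest
            obtain ⟨qf2, νf2, hst2, hfin2⟩ := ih (y + t) (y' + t') c θ.dst hreg2 hmem
            refine ⟨qf2, νf2, Steps.cons θ hθ hsrc hlab hgoal_sat ?_, hfin2⟩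
            rw [hres]
            simp only [Bool.false_eq_true, if_false]
            rw [hrs, hrs']
            have e1 : y' + (c : ℝ≥0) + t' = (y' + t') + (c : ℝ≥0) := by ring
            rw [e1]
            exact hst2

/-- The two-sided version of the simulation lemma. -/
lemma mem_langFrom_tau_iff (hirta : M.IsIRTA) (hK : ∀ θ ∈ M.trans, θ.guard.maxConst ≤ K)
    {w : TimedWord A} {y y' : ℝ≥0} (c : ℕ) (q : M.Q) (hreg : RegEq K y y') :
    w ∈ M.LangFrom (q, y + (c : ℝ≥0)) ↔
      tauWAux K y y' w ∈ M.LangFrom (q, y' + (c : ℝ≥0)) := by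
  constructor
  · exact steps_tau_fwd hirta hK w y y' c q hreg
  · intro h
    have h2 := steps_tau_fwd hirta hK _ y' y c q hreg.symm h
    rwa [tauWAux_inv hreg] at h2

end Forward

/-! ### Forward direction: residual characterizations -/

section Forward2
variable {A : Type} {M : TA A} {K : ℕ}

lemma resetStep_zero : resetStep K (0 : ℝ≥0) = 0 := by
  rw [resetStep, if_pos ⟨0, Nat.zero_le K, by simp⟩]

lemma resetStep_idem (v : ℝ≥0) : resetStep K (resetStep K v) = resetStep K v := by
  by_cases h : ∃ m : ℕ, m ≤ K ∧ v = (m : ℝ≥0)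
  · have h1 : resetStep K v = 0 := by rw [resetStep, if_pos h]
    rw [h1, resetStep_zero]
  · have h1 : resetStep K v = v := by rw [resetStep, if_neg h]
    rw [h1, h1]

lemma resetStep_cKAux : ∀ (d : Timestamp) (v : ℝ≥0),
    resetStep K (cKAux K (resetStep K v) d) = cKAux K (resetStep K v) d := by
  intro d
  induction d with
  | nil => intro v; exact resetStep_idem v
  | cons t d ih =>
      intro v
      rw [cKAux_cons]
      exact ih (resetStep K v + t)

lemma resetStep_cKW (u : TimedWord A) : resetStep K (cKW K u) = cKW K u := by
  have h0 : resetStep K (0 : ℝ≥0) = 0 := resetStep_zero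
  have := resetStep_cKAux (K := K) (u.map Prod.fst) 0
  rw [h0] at this
  exact this

lemma mem_residual_iff {u z : TimedWord A} :
    z ∈ residual M.Lang u ↔
      ∃ q ν, Steps M (M.init, 0) u (q, ν) ∧ z ∈ M.LangFrom (q, ν) := by
  constructor
  · intro h
    obtain ⟨qf, νf, hst, hfin⟩ := h
    obtain ⟨c', h1, h2⟩ := steps_append_split hst
    obtain ⟨q, ν⟩ := c'
    exact ⟨q, ν, h1, qf, νf, h2, hfin⟩
  · rintro ⟨q, ν, hst, qf, νf, hst2, hfin⟩
    exact ⟨qf, νf, steps_append hst hst2, hfin⟩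

lemma reach_from_init (hirta : M.IsIRTA) (hK : ∀ θ ∈ M.trans, θ.guard.maxConst ≤ K)
    {u : TimedWord A} {q : M.Q} {ν : ℝ≥0} (h : Steps M (M.init, 0) u (q, ν)) :
    ∃ c : ℕ, ν = cKW K u + (c : ℝ≥0) := by
  have h' : Steps M (M.init, (0 : ℝ≥0) + ((0 : ℕ) : ℝ≥0)) u (q, ν) := by simpa using h
  have := reach_decomp hirta hK u M.init 0 0 (q, ν) h'
  simpa [cKW, cK] using this

lemma residual_append {L : Set (TimedWord A)} {u : TimedWord A} {t : ℝ≥0} {a : A}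
    {z : TimedWord A} :
    z ∈ residual L (u ++ [(t, a)]) ↔ (t, a) :: z ∈ residual L u := by
  simp [residual, List.append_assoc]

lemma res_step_swap_dir (hirta : M.IsIRTA) (hK : ∀ θ ∈ M.trans, θ.guard.maxConst ≤ K)
    {u : TimedWord A} {t t₀ : ℝ≥0} (a : A)
    (hreg' : RegEq K (cKW K u + t) (cKW K u + t₀)) (X : TimedWord A)
    (h : (t, a) :: X ∈ residual M.Lang u) :
    (t₀, a) :: tauWAux K (resetStep K (cKW K u + t)) (resetStep K (cKW K u + t₀)) X ∈
      residual M.Lang u := by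
  rw [mem_residual_iff] at h ⊢
  obtain ⟨q, ν, hst, hmem⟩ := h
  obtain ⟨c, rfl⟩ := reach_from_init hirta hK hst
  refine ⟨q, _, hst, ?_⟩
  obtain ⟨qf, νf, hstc, hfin⟩ := hmem
  obtain ⟨θ, hθ, hsrc, hlab, hg, hrest⟩ := steps_cons_inv hstc
  have hregc : RegEq K (cKW K u + (c : ℝ≥0) + t) (cKW K u + (c : ℝ≥0) + t₀) := by
    have e1 : cKW K u + (c : ℝ≥0) + t = (cKW K u + t) + (c : ℝ≥0) := by ring
    have e2 : cKW K u + (c : ℝ≥0) + t₀ = (cKW K u + t₀) + (c : ℝ≥0) := by ring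
    rw [e1, e2]
    exact regEq_add_natCast hreg' c
  have hsat₀ : θ.guard.sat (cKW K u + (c : ℝ≥0) + t₀) := (sat_det hregc (hK θ hθ)).1 hg
  cases hres : θ.reset with
  | true =>
      obtain ⟨m, hm⟩ := hirta θ hθ hres
      have hg' := hg
      rw [hm, CC.sat] at hg'
      have hsat₀' := hsat₀
      rw [hm, CC.sat] at hsat₀'
      have ht : t₀ = t := by
        have := hg'.trans hsat₀'.symm
        have e1 : cKW K u + (c : ℝ≥0) + t = cKW K u + (c : ℝ≥0) + t₀ := this
        exact (add_left_cancel e1).symm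
      subst ht
      rw [tauWAux_self]
      exact ⟨qf, νf, hstc, hfin⟩
  | false =>
      by_cases hr2 : ∃ m' : ℕ, m' ≤ K ∧ cKW K u + t = (m' : ℝ≥0)
      · obtain ⟨m', hm', hym⟩ := hr2
        have hym' : cKW K u + t₀ = (m' : ℝ≥0) := regEq_natCast hreg' hym hm'
        have ht : t₀ = t := add_left_cancel (hym'.trans hym.symm)
        subst ht
        rw [tauWAux_self]
        exact ⟨qf, νf, hstc, hfin⟩
      · have hr2' : ¬ ∃ m' : ℕ, m' ≤ K ∧ cKW K u + t₀ = (m' : ℝ≥0) :=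
          resetStep_natCast_iff hreg' hr2
        have hrs : resetStep K (cKW K u + t) = cKW K u + t := by
          rw [resetStep, if_neg hr2]
        have hrs' : resetStep K (cKW K u + t₀) = cKW K u + t₀ := by
          rw [resetStep, if_neg hr2']
        rw [hres] at hrest
        simp only [Bool.false_eq_true, if_false] at hrest
        have hXmem : X ∈ M.LangFrom (θ.dst, (cKW K u + t) + (c : ℝ≥0)) := by
          refine ⟨qf, νf, ?_, hfin⟩
          have e1 : cKW K u + (c : ℝ≥0) + t = (cKW K u + t) + (c : ℝ≥0) := by ring
          rwa [e1] at hrest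
        have hYreg : RegEq K (cKW K u + t) (cKW K u + t₀) := hreg'
        have htr := (mem_langFrom_tau_iff hirta hK c θ.dst hYreg).1 hXmem
        obtain ⟨qf2, νf2, hst3, hfin2⟩ := htr
        refine ⟨qf2, νf2, Steps.cons θ hθ hsrc hlab hsat₀ ?_, hfin2⟩
        rw [hres]
        simp only [Bool.false_eq_true, if_false]
        rw [hrs, hrs']
        have e2 : cKW K u + (c : ℝ≥0) + t₀ = (cKW K u + t₀) + (c : ℝ≥0) := by ring
        rw [e2]
        exact hst3

lemma res_step_swap (hirta : M.IsIRTA) (hK : ∀ θ ∈ M.trans, θ.guard.maxConst ≤ K)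
    {u : TimedWord A} {t t₀ : ℝ≥0} (a : A)
    (hreg' : RegEq K (cKW K u + t) (cKW K u + t₀)) (X : TimedWord A) :
    (t, a) :: X ∈ residual M.Lang u ↔
      (t₀, a) :: tauWAux K (resetStep K (cKW K u + t)) (resetStep K (cKW K u + t₀)) X ∈
        residual M.Lang u := by
  constructor
  · exact res_step_swap_dir hirta hK a hreg' X
  · intro h
    have h2 := res_step_swap_dir hirta hK a hreg'.symm _ h
    rwa [tauWAux_inv (resetStep_regEq hreg')] at h2

end Forward2

/-! ### Forward direction: assembly -/

/-- Low reachable configurations. -/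
def LoSet {A : Type} (M : TA A) (K : ℕ) (u : TimedWord A) : Set (M.Q × ℕ) :=
  {p | p.2 ≤ K ∧ cKW K u + (p.2 : ℝ≥0) ≤ (K : ℝ≥0) ∧
    Steps M (M.init, 0) u (p.1, cKW K u + (p.2 : ℝ≥0))}

/-- High reachable states. -/
def HiSet {A : Type} (M : TA A) (K : ℕ) (u : TimedWord A) : Set M.Q :=
  {q | ∃ ν, Steps M (M.init, 0) u (q, ν) ∧ (K : ℝ≥0) < ν}

section Forward3
variable {A : Type} {M : TA A} {K : ℕ}

lemma residual_char (hirta : M.IsIRTA) (hK : ∀ θ ∈ M.trans, θ.guard.maxConst ≤ K)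
    (u z : TimedWord A) :
    z ∈ residual M.Lang u ↔
      ((∃ p ∈ LoSet M K u, z ∈ M.LangFrom (p.1, cKW K u + (p.2 : ℝ≥0))) ∨
        (∃ q ∈ HiSet M K u, z ∈ M.LangFrom (q, cKW K u + ((K + 1 : ℕ) : ℝ≥0)))) := by
  constructor
  · intro h
    rw [mem_residual_iff] at h
    obtain ⟨q, ν, hst, hz⟩ := h
    obtain ⟨c, rfl⟩ := reach_from_init hirta hK hst
    by_cases hν : cKW K u + (c : ℝ≥0) ≤ (K : ℝ≥0)
    · left
      refine ⟨(q, c), ⟨?_, hν, hst⟩, hz⟩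
      have h1 : (c : ℝ≥0) ≤ (K : ℝ≥0) := le_trans le_add_self hν
      exact_mod_cast h1
    · right
      push_neg at hν
      refine ⟨q, ⟨_, hst, hν⟩, ?_⟩
      refine langFrom_gtK_mono hirta hK z q _ _ hν ?_ hz
      calc (K : ℝ≥0) < ((K + 1 : ℕ) : ℝ≥0) := by exact_mod_cast lt_add_one K
        _ ≤ cKW K u + ((K + 1 : ℕ) : ℝ≥0) := le_add_self
  · rintro (⟨p, hp, hz⟩ | ⟨q, ⟨ν, hst, hν⟩, hz⟩)
    · rw [mem_residual_iff]
      exact ⟨p.1, _, hp.2.2, hz⟩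
    · rw [mem_residual_iff]
      refine ⟨q, ν, hst, ?_⟩
      refine langFrom_gtK_mono hirta hK z q _ _ ?_ hν hz
      calc (K : ℝ≥0) < ((K + 1 : ℕ) : ℝ≥0) := by exact_mod_cast lt_add_one K
        _ ≤ cKW K u + ((K + 1 : ℕ) : ℝ≥0) := le_add_self

lemma approx_iff_char (hirta : M.IsIRTA) (hK : ∀ θ ∈ M.trans, θ.guard.maxConst ≤ K)
    (u v : TimedWord A) :
    ApproxLK M.Lang K u v ↔
      (RegEq K (cKW K u) (cKW K v) ∧ ∀ z : TimedWord A,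
        (((∃ p ∈ LoSet M K u, z ∈ M.LangFrom (p.1, cKW K v + (p.2 : ℝ≥0))) ∨
          (∃ q ∈ HiSet M K u, z ∈ M.LangFrom (q, cKW K v + ((K + 1 : ℕ) : ℝ≥0)))) ↔
          z ∈ residual M.Lang v)) := by
  unfold ApproxLK
  apply and_congr_right
  intro hreg
  have hfun : tauW K (cKW K u) (cKW K v) = (tauWAux K (cKW K u) (cKW K v) :
      TimedWord A → TimedWord A) :=
    funext fun (w : TimedWord A) => by rw [tauW_eq_tauWAux, resetStep_cKW, resetStep_cKW]
  rw [hfun, Set.ext_iff]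
  refine forall_congr' fun z => ?_
  rw [mem_tauWAux_image hreg]
  refine iff_congr ?_ Iff.rfl
  rw [residual_char hirta hK u (tauWAux K (cKW K v) (cKW K u) z)]
  apply or_congr
  · constructor
    · rintro ⟨p, hp, hz⟩
      refine ⟨p, hp, ?_⟩
      have h2 := (mem_langFrom_tau_iff hirta hK p.2 p.1 hreg).1 hz
      rwa [tauWAux_inv hreg.symm] at h2
    · rintro ⟨p, hp, hz⟩
      refine ⟨p, hp, ?_⟩
      rw [mem_langFrom_tau_iff hirta hK p.2 p.1 hreg, tauWAux_inv hreg.symm]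
      exact hz
  · constructor
    · rintro ⟨q, hq, hz⟩
      refine ⟨q, hq, ?_⟩
      have h2 := (mem_langFrom_tau_iff hirta hK (K + 1) q hreg).1 hz
      rwa [tauWAux_inv hreg.symm] at h2
    · rintro ⟨q, hq, hz⟩
      refine ⟨q, hq, ?_⟩
      rw [mem_langFrom_tau_iff hirta hK (K + 1) q hreg, tauWAux_inv hreg.symm]
      exact hz

lemma approx_mono (hirta : M.IsIRTA) (hK : ∀ θ ∈ M.trans, θ.guard.maxConst ≤ K) :
    KMonotonic K (ApproxLK M.Lang K) := by
  intro u v hApp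
  refine ⟨hApp.1, ?_⟩
  intro a t t' hreg
  have huv : RegEq K (cKW K u) (cKW K v) := hApp.1
  constructor
  · rw [cKW_append_single, cKW_append_single]
    exact resetStep_regEq hreg
  · set yu := cKW K u with hyu
    set yv := cKW K v with hyv
    set t₀ := tauStep K yv yu t' with ht₀
    have hreg1 : RegEq K (yv + t') (yu + t₀) := regEq_add_tauStep huv.symm t'
    have hreg' : RegEq K (yu + t) (yu + t₀) := hreg.trans hreg1
    set Y := resetStep K (yu + t) with hY
    set Y' := resetStep K (yv + t') with hY'
    set Y₀ := resetStep K (yu + t₀) with hY₀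
    have hYY' : RegEq K Y Y' := resetStep_regEq hreg
    have hYY₀ : RegEq K Y Y₀ := resetStep_regEq hreg'
    have hLu : cKW K (u ++ [(t, a)]) = Y := cKW_append_single u t a
    have hLv : cKW K (v ++ [(t', a)]) = Y' := cKW_append_single v t' a
    have hfun : tauW K (cKW K (u ++ [(t, a)])) (cKW K (v ++ [(t', a)]))
        = (tauWAux K Y Y' : TimedWord A → TimedWord A) := by
      funext (w : TimedWord A)
      rw [tauW_eq_tauWAux, hLu, hLv, hY, hY', resetStep_idem, resetStep_idem]
    rw [hfun]
    have hresv : residual M.Lang v = tauWAux K yu yv '' residual M.Lang u := by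
      rw [← hApp.2]
      have hf2 : tauW K (cKW K u) (cKW K v) = (tauWAux K yu yv :
          TimedWord A → TimedWord A) :=
        funext fun (w : TimedWord A) => by
          rw [tauW_eq_tauWAux, ← hyu, ← hyv, resetStep_cKW, resetStep_cKW]
      rw [hf2]
    ext z
    rw [mem_tauWAux_image hYY', residual_append, residual_append,
      res_step_swap hirta hK a hreg' (tauWAux K Y' Y z)]
    have hcomp : tauWAux K Y Y₀ (tauWAux K Y' Y z) = tauWAux K Y' Y₀ z :=
      tauWAux_comp hYY'.symm hYY₀ z
    have hcons : tauWAux K yv yu ((t', a) :: z) = (t₀, a) :: tauWAux K Y' Y₀ z := by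
      rw [tauWAux_cons]
    rw [hresv, mem_tauWAux_image huv, hcons]
    rw [show resetStep K (yu + t) = Y from rfl, show resetStep K (yu + t₀) = Y₀ from rfl,
      hcomp]

lemma class_transfer (hirta : M.IsIRTA) (hK : ∀ θ ∈ M.trans, θ.guard.maxConst ≤ K)
    {u v : TimedWord A} (hreg : RegEq K (cKW K u) (cKW K v))
    (hLo : LoSet M K u = LoSet M K v) (hHi : HiSet M K u = HiSet M K v) :
    {w | ApproxLK M.Lang K u w} = {w | ApproxLK M.Lang K v w} := by
  ext w
  simp only [Set.mem_setOf_eq]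
  rw [approx_iff_char hirta hK u w, approx_iff_char hirta hK v w, hLo, hHi]
  constructor
  · rintro ⟨h1, h2⟩
    exact ⟨hreg.symm.trans h1, h2⟩
  · rintro ⟨h1, h2⟩
    exact ⟨hreg.trans h1, h2⟩

noncomputable def rhoAbs (K : ℕ) (x : ℝ≥0) : Option (ℕ × Bool) :=
  if x ≤ (K : ℝ≥0) then some (⌊x⌋₊, if fracPart x = 0 then true else false) else none

lemma rhoAbs_regEq {x x' : ℝ≥0} (h : rhoAbs K x = rhoAbs K x') : RegEq K x x' := by
  unfold rhoAbs at h
  by_cases hx : x ≤ (K : ℝ≥0) <;> by_cases hx' : x' ≤ (K : ℝ≥0)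
  · rw [if_pos hx, if_pos hx'] at h
    obtain ⟨h1, h2⟩ := Prod.mk.injEq .. ▸ Option.some_injective _ h
    left
    refine ⟨h1, ?_⟩
    by_cases hz : fracPart x = 0 <;> by_cases hz' : fracPart x' = 0
    · exact iff_of_true hz hz'
    · rw [if_pos hz, if_neg hz'] at h2; exact absurd h2 (by simp)
    · rw [if_neg hz, if_pos hz'] at h2; exact absurd h2 (by simp)
    · exact iff_of_false hz hz'
  · rw [if_pos hx, if_neg hx'] at h; exact absurd h (by simp)
  · rw [if_neg hx, if_pos hx'] at h; exact absurd h (by simp)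
  · exact Or.inr ⟨not_le.1 hx, not_le.1 hx'⟩

lemma approx_finiteIndex (hQfin : Finite M.Q) (hirta : M.IsIRTA)
    (hK : ∀ θ ∈ M.trans, θ.guard.maxConst ≤ K) :
    FiniteIndex (ApproxLK M.Lang K) := by
  classical
  set Φ : TimedWord A → Option (ℕ × Bool) × Set (M.Q × ℕ) × Set M.Q :=
    fun u => (rhoAbs K (cKW K u), LoSet M K u, HiSet M K u) with hΦ
  have key : ∀ u v : TimedWord A, Φ u = Φ v →
      {w | ApproxLK M.Lang K u w} = {w | ApproxLK M.Lang K v w} := by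
    intro u v h
    simp only [hΦ, Prod.mk.injEq] at h
    exact class_transfer hirta hK (rhoAbs_regEq h.1) h.2.1 h.2.2
  have hrange : (Set.range Φ).Finite := by
    have h1 : (insert none (Option.some '' (Set.Iic K ×ˢ (Set.univ : Set Bool)))).Finite :=
      Set.Finite.insert _ (Set.Finite.image _
        (Set.Finite.prod (Set.finite_Iic K) Set.finite_univ))
    have h2 : {S : Set (M.Q × ℕ) | S ⊆ (Set.univ : Set M.Q) ×ˢ Set.Iic K}.Finite :=
      Set.Finite.finite_subsets (Set.Finite.prod Set.finite_univ (Set.finite_Iic K))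
    have h3 : {S : Set M.Q | S ⊆ (Set.univ : Set M.Q)}.Finite :=
      Set.Finite.finite_subsets Set.finite_univ
    refine Set.Finite.subset (Set.Finite.prod h1 (Set.Finite.prod h2 h3)) ?_
    rintro x ⟨u, rfl⟩
    refine ⟨?_, ?_, ?_⟩
    · simp only [hΦ]
      unfold rhoAbs
      by_cases hx : cKW K u ≤ (K : ℝ≥0)
      · rw [if_pos hx]
        exact Set.mem_insert_of_mem _ ⟨(⌊cKW K u⌋₊, _), ⟨floor_le_self_nat hx, trivial⟩, rfl⟩
      · rw [if_neg hx]
        exact Set.mem_insert _ _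
    · intro p hp
      exact ⟨trivial, hp.1⟩
    · intro q _
      trivial
  have : Finite ↥(Set.range Φ) := hrange.to_subtype
  set F : ↥(Set.range Φ) → Set (TimedWord A) :=
    fun p => {w | ApproxLK M.Lang K (Classical.choose p.2) w} with hF
  refine Set.Finite.subset (Set.finite_range F) ?_
  rintro S ⟨u, rfl⟩
  refine ⟨⟨Φ u, ⟨u, rfl⟩⟩, ?_⟩
  exact key _ _ (Classical.choose_spec (⟨u, rfl⟩ : ∃ x, Φ x = Φ u))

theorem forward_direction (hfinM : M.IsFinite) (hirta : M.IsIRTA) :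
    ∃ K : ℕ, KMonotonic K (ApproxLK M.Lang K) ∧ FiniteIndex (ApproxLK M.Lang K) := by
  have hQfin : Finite M.Q := hfinM.1
  have himg : ((fun θ : TTrans M.Q A => θ.guard.maxConst) '' M.trans).Finite :=
    hfinM.2.image _
  obtain ⟨K, hKb⟩ := himg.bddAbove
  have hK : ∀ θ ∈ M.trans, θ.guard.maxConst ≤ K := fun θ hθ =>
    hKb ⟨θ, hθ, rfl⟩
  exact ⟨K, approx_mono hirta hK, approx_finiteIndex hQfin hirta hK⟩

end Forward3


/-- `L` is accepted by a 1-IRTA iff for some `K`, `≈^{L,K}` is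
`K`-monotonic and of finite index. -/
theorem statement13 {A : Type} [Finite A] (L : Set (TimedWord A)) :
    (∃ M : TA A, M.IsFinite ∧ M.IsIRTA ∧ M.Lang = L) ↔
      (∃ K : ℕ, KMonotonic K (ApproxLK L K) ∧ FiniteIndex (ApproxLK L K)) := by
  constructor
  · rintro ⟨M, hf, hi, hl⟩
    subst hl
    exact forward_direction hf hi
  · rintro ⟨K, h1, h2⟩
    exact backward_direction L K h1 h2

end IRTA
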